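/- arXiv:1708.04281 — 10 statements merged into one kernel-verified Lean document; each statement's English description precedes it below -/
import Mathlib

section
/- For every t ∈ {0,…,T} and all x, y ∈ [0,∞), |v(t,x) − v(t,y)| ≤ |x − y|; in particular v(t,·) is Lipschitz continuous on [0,∞) with constant 1, and v(t,w+ε) ≤ v(t,w) + ε for every w ≥ 0 and ε > 0. -/
open MeasureTheory ProbabilityTheory Real
open scoped NNReal ENNReal

lemma gauss_eq : gaussianReal 0 1 =
    (volume : Measure ℝ).withDensity (fun x => ((gaussianPDFReal 0 1 x).toNNReal : ENNReal)) := by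
  rw [gaussianReal_of_var_ne_zero 0 one_ne_zero]
  rfl

lemma integral_gauss (g : ℝ → ℝ) :
    ∫ z, g z ∂(gaussianReal 0 1) = ∫ z, gaussianPDFReal 0 1 z * g z := by
  rw [gauss_eq, integral_withDensity_eq_integral_smul
    ((measurable_gaussianPDFReal 0 1).real_toNNReal) g]
  congr 1; ext z
  simp [NNReal.smul_def, Real.coe_toNNReal _ (gaussianPDFReal_nonneg 0 1 z)]

lemma pdf_mul_exp (σ a z : ℝ) :
    gaussianPDFReal 0 1 z * Real.exp (a + σ * z)
      = Real.exp (a + σ ^ 2 / 2) * gaussianPDFReal σ 1 z := by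
  simp only [gaussianPDFReal, NNReal.coe_one, mul_one, sub_zero]
  rw [mul_assoc, ← Real.exp_add, mul_comm (Real.exp _), mul_assoc, ← Real.exp_add]
  congr 1
  ring_nf

lemma integrable_exp_gauss (σ a : ℝ) :
    Integrable (fun z => Real.exp (a + σ * z)) (gaussianReal 0 1) := by
  rw [gauss_eq]
  refine (integrable_withDensity_iff_integrable_smul
    ((measurable_gaussianPDFReal 0 1).real_toNNReal) (g := fun z => Real.exp (a + σ * z))).mpr ?_
  have : (fun z => ((gaussianPDFReal 0 1 z).toNNReal : ℝ≥0) • Real.exp (a + σ * z))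
      = fun z => Real.exp (a + σ ^ 2 / 2) * gaussianPDFReal σ 1 z := by
    ext z
    rw [NNReal.smul_def, Real.coe_toNNReal _ (gaussianPDFReal_nonneg 0 1 z), smul_eq_mul,
      pdf_mul_exp]
  rw [this]
  exact (integrable_gaussianPDFReal σ 1).const_mul _

lemma integral_exp_gauss (σ a : ℝ) :
    ∫ z, Real.exp (a + σ * z) ∂(gaussianReal 0 1) = Real.exp (a + σ ^ 2 / 2) := by
  rw [integral_gauss]
  simp_rw [pdf_mul_exp]
  rw [integral_const_mul, integral_gaussianPDFReal_eq_one σ one_ne_zero, mul_one]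

lemma integrable_comp_exp {f : ℝ → ℝ} (hf : ∀ a b, |f a - f b| ≤ |a - b|) (A B σ : ℝ) :
    Integrable (fun z => f (A * Real.exp (B + σ * z))) (gaussianReal 0 1) := by
  have hlip : LipschitzWith 1 f := by
    refine LipschitzWith.of_dist_le_mul fun a b => ?_
    rw [Real.dist_eq, Real.dist_eq]
    simpa using hf a b
  have hcont : Continuous fun z => f (A * Real.exp (B + σ * z)) :=
    hlip.continuous.comp (by continuity)
  refine Integrable.mono' ((integrable_const |f 0|).add
    ((integrable_exp_gauss σ B).const_mul |A|)) hcont.aestronglyMeasurable ?_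
  refine ae_of_all _ fun z => ?_
  have h1 : |f (A * Real.exp (B + σ * z)) - f 0| ≤ |A * Real.exp (B + σ * z)| := by
    simpa using hf (A * Real.exp (B + σ * z)) 0
  have h2 : |A * Real.exp (B + σ * z)| = |A| * Real.exp (B + σ * z) := by
    rw [abs_mul, abs_of_pos (Real.exp_pos _)]
  calc ‖f (A * Real.exp (B + σ * z))‖ = |f (A * Real.exp (B + σ * z))| := rfl
    _ ≤ |f 0| + |A * Real.exp (B + σ * z)| := by
        have := abs_sub_abs_le_abs_sub (f (A * Real.exp (B + σ * z))) (f 0)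
        linarith [h1]
    _ = |f 0| + |A| * Real.exp (B + σ * z) := by rw [h2]

/-- Salary at integer time `t`: `L_t = L₀ · e^{μ_L t}`. -/
noncomputable def salary (L0 μL : ℝ) (t : ℕ) : ℝ := L0 * Real.exp (μL * t)

/-- The ABO `K_t = b · t · L_{t−1} · ä · e^{−r(T−t)}`. -/
noncomputable def ABO (T : ℕ) (r b aT L0 μL : ℝ) (t : ℕ) : ℝ :=
  b * t * (L0 * Real.exp (μL * ((t : ℝ) - 1))) * aT * Real.exp (-r * ((T : ℝ) - (t : ℝ)))

/-- Auxiliary value function: `bermudanAux n w` is the value at time `t = T − n`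
with `n` periods to go, defined by backward induction. -/
noncomputable def bermudanAux (T : ℕ) (r σ μL c b aT L0 : ℝ) : ℕ → ℝ → ℝ
  | 0, w => max (w - ABO T r b aT L0 μL T) 0
  | n + 1, w =>
      max (max (w - ABO T r b aT L0 μL (T - (n + 1))) 0)
        (Real.exp (-r) *
          ∫ z, bermudanAux T r σ μL c b aT L0 n
              ((w + c * salary L0 μL (T - (n + 1))) * Real.exp (r - σ ^ 2 / 2 + σ * z))
            ∂(gaussianReal 0 1))

/-- The discrete-time value function of the Bermudan DB underpin option:
`v(T,w) = max(w − K_T, 0)` and for `t < T`,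
`v(t,w) = max( max(w − K_t, 0), e^{−r} ∫ v(t+1, (w + c·L_t)·e^{r−σ²/2+σz}) γ(dz) )`. -/
noncomputable def bermudanValue (T : ℕ) (r σ μL c b aT L0 : ℝ) (t : ℕ) (w : ℝ) : ℝ :=
  bermudanAux T r σ μL c b aT L0 (T - t) w


lemma bermudanAux_lip (T : ℕ) (r σ μL c b aT L0 : ℝ) :
    ∀ n x y, |bermudanAux T r σ μL c b aT L0 n x - bermudanAux T r σ μL c b aT L0 n y|
      ≤ |x - y| := by
  intro n
  induction n with
  | zero =>
      intro x y
      simp only [bermudanAux]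
      have := abs_max_sub_max_le_abs (x - ABO T r b aT L0 μL T) (y - ABO T r b aT L0 μL T) 0
      simpa using this
  | succ n ih =>
      intro x y
      simp only [bermudanAux]
      set K := ABO T r b aT L0 μL (T - (n + 1))
      set A := c * salary L0 μL (T - (n + 1))
      set B := r - σ ^ 2 / 2
      have hex : |max (x - K) 0 - max (y - K) 0| ≤ |x - y| := by
        have := abs_max_sub_max_le_abs (x - K) (y - K) 0
        simpa using this
      -- continuation values
      set gx := fun z => bermudanAux T r σ μL c b aT L0 n ((x + A) * Real.exp (B + σ * z))
      set gy := fun z => bermudanAux T r σ μL c b aT L0 n ((y + A) * Real.exp (B + σ * z))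
      have hix : Integrable gx (gaussianReal 0 1) := integrable_comp_exp ih _ _ _
      have hiy : Integrable gy (gaussianReal 0 1) := integrable_comp_exp ih _ _ _
      have hcontbound :
          |(∫ z, gx z ∂(gaussianReal 0 1)) - ∫ z, gy z ∂(gaussianReal 0 1)|
            ≤ |x - y| * Real.exp (B + σ ^ 2 / 2) := by
        rw [← integral_sub hix hiy]
        calc |∫ z, gx z - gy z ∂(gaussianReal 0 1)|
            ≤ ∫ z, |gx z - gy z| ∂(gaussianReal 0 1) := by
              simpa [Real.norm_eq_abs] using
                norm_integral_le_integral_norm (μ := gaussianReal 0 1) fun z => gx z - gy z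
          _ ≤ ∫ z, |x - y| * Real.exp (B + σ * z) ∂(gaussianReal 0 1) := by
              refine integral_mono ((hix.sub hiy).abs)
                (((integrable_exp_gauss σ B)).const_mul _) fun z => ?_
              have := ih ((x + A) * Real.exp (B + σ * z)) ((y + A) * Real.exp (B + σ * z))
              calc |gx z - gy z|
                  ≤ |(x + A) * Real.exp (B + σ * z) - (y + A) * Real.exp (B + σ * z)| := this
                _ = |x - y| * Real.exp (B + σ * z) := by
                    rw [← sub_mul, abs_mul, abs_of_pos (Real.exp_pos _)]
                    ring_nf
          _ = |x - y| * Real.exp (B + σ ^ 2 / 2) := by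
              rw [integral_const_mul, integral_exp_gauss]
      have hcont : |Real.exp (-r) * (∫ z, gx z ∂(gaussianReal 0 1))
          - Real.exp (-r) * ∫ z, gy z ∂(gaussianReal 0 1)| ≤ |x - y| := by
        rw [← mul_sub, abs_mul, abs_of_pos (Real.exp_pos _)]
        have hBe : Real.exp (-r) * (|x - y| * Real.exp (B + σ ^ 2 / 2)) = |x - y| := by
          rw [← mul_assoc, mul_comm (Real.exp (-r)), mul_assoc, ← Real.exp_add]
          have : -r + (B + σ ^ 2 / 2) = 0 := by simp only [B]; ring
          rw [this, Real.exp_zero, mul_one]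
        calc Real.exp (-r) * |(∫ z, gx z ∂(gaussianReal 0 1)) - ∫ z, gy z ∂(gaussianReal 0 1)|
            ≤ Real.exp (-r) * (|x - y| * Real.exp (B + σ ^ 2 / 2)) :=
              mul_le_mul_of_nonneg_left hcontbound (Real.exp_pos _).le
          _ = |x - y| := hBe
      calc |max (max (x - K) 0) (Real.exp (-r) * ∫ z, gx z ∂(gaussianReal 0 1))
            - max (max (y - K) 0) (Real.exp (-r) * ∫ z, gy z ∂(gaussianReal 0 1))|
          ≤ max |max (x - K) 0 - max (y - K) 0|
              |Real.exp (-r) * (∫ z, gx z ∂(gaussianReal 0 1))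
                - Real.exp (-r) * ∫ z, gy z ∂(gaussianReal 0 1)| :=
            abs_max_sub_max_le_max _ _ _ _
        _ ≤ |x - y| := max_le hex hcont

/-- For every `t ∈ {0,…,T}` and `x, y ∈ [0,∞)`, `|v(t,x) − v(t,y)| ≤ |x − y|`
(`v(t,·)` is 1-Lipschitz on `[0,∞)`), and `v(t,w+ε) ≤ v(t,w) + ε` for `w ≥ 0`, `ε > 0`. -/
theorem bermudanValue_lipschitz (T : ℕ) (hT : 1 ≤ T) (r σ μL c b aT L0 : ℝ)
    (hr : 0 ≤ r) (hσ : 0 < σ) (hμL : 0 ≤ μL) (hc : 0 < c) (hb : 0 < b)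
    (haT : 0 < aT) (hL0 : 0 < L0) (t : ℕ) (ht : t ≤ T) :
    (∀ x y : ℝ, 0 ≤ x → 0 ≤ y →
      |bermudanValue T r σ μL c b aT L0 t x - bermudanValue T r σ μL c b aT L0 t y| ≤ |x - y|) ∧
    (∀ w : ℝ, 0 ≤ w → ∀ ε : ℝ, 0 < ε →
      bermudanValue T r σ μL c b aT L0 t (w + ε) ≤ bermudanValue T r σ μL c b aT L0 t w + ε) := by
  have key := bermudanAux_lip T r σ μL c b aT L0 (T - t)
  constructor
  · intro x y _ _
    simpa only [bermudanValue] using key x y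
  · intro w _ ε hε
    have h := key (w + ε) w
    rw [add_sub_cancel_left, abs_of_pos hε] at h
    have h2 := le_of_abs_le h
    simp only [bermudanValue]
    linarith
end

section
/- For every t ∈ {0,…,T}, the map w ↦ v(t,w) is convex on [0,∞): for all w₁, w₂ ∈ [0,∞) and λ ∈ [0,1], v(t, λw₁ + (1−λ)w₂) ≤ λ·v(t,w₁) + (1−λ)·v(t,w₂). -/
open MeasureTheory ProbabilityTheory Real

open scoped NNReal
lemma integrable_exp_gaussian (a : ℝ) :
    Integrable (fun z => Real.exp (a * z)) (gaussianReal 0 1) := by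
  rw [gaussianReal_of_var_ne_zero 0 one_ne_zero,
    integrable_withDensity_iff (measurable_gaussianPDF 0 1)
      (Filter.Eventually.of_forall fun x => ENNReal.ofReal_lt_top)]
  have base : Integrable (fun x : ℝ => rexp (-(1/2) * x ^ 2)) :=
    integrable_exp_neg_mul_sq (by norm_num)
  have h := ((base.comp_sub_right a).const_mul ((Real.sqrt (2 * π * ((1:ℝ≥0):ℝ)))⁻¹ * rexp (a ^ 2 / 2)))
  refine h.congr (Filter.Eventually.of_forall fun x => ?_)
  simp only [gaussianPDF_def]
  rw [ENNReal.toReal_ofReal (by rw [gaussianPDFReal]; positivity), gaussianPDFReal]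
  have e1 : a ^ 2 / 2 + -(1/2) * (x - a) ^ 2 = a * x + -(x - 0) ^ 2 / (2 * ((1:ℝ≥0):ℝ)) := by
    push_cast; ring
  calc (Real.sqrt (2 * π * ((1:ℝ≥0):ℝ)))⁻¹ * rexp (a ^ 2 / 2) * rexp (-(1/2) * (x - a) ^ 2)
      = (Real.sqrt (2 * π * ((1:ℝ≥0):ℝ)))⁻¹ * rexp (a ^ 2 / 2 + -(1/2) * (x - a) ^ 2) := by
        rw [mul_assoc, ← Real.exp_add]
    _ = (Real.sqrt (2 * π * ((1:ℝ≥0):ℝ)))⁻¹ * (rexp (a * x) * rexp (-(x - 0) ^ 2 / (2 * ((1:ℝ≥0):ℝ)))) := by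
        rw [e1, Real.exp_add]
    _ = rexp (a * x) * ((Real.sqrt (2 * π * ((1:ℝ≥0):ℝ)))⁻¹ * rexp (-(x - 0) ^ 2 / (2 * ((1:ℝ≥0):ℝ)))) := by ring

/-- Convexity of `max (· - K) 0`. -/
lemma convexOn_exercise (K : ℝ) : ConvexOn ℝ Set.univ (fun w : ℝ => max (w - K) 0) := by
  refine ⟨convex_univ, fun x _ y _ p q hp hq hpq => ?_⟩
  simp only [smul_eq_mul]
  refine max_le ?_ ?_
  · have harg : p * x + q * y - K = p * (x - K) + q * (y - K) := by
      linear_combination K * hpq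
    rw [harg]
    exact add_le_add (mul_le_mul_of_nonneg_left (le_max_left _ _) hp)
      (mul_le_mul_of_nonneg_left (le_max_left _ _) hq)
  · exact add_nonneg (mul_nonneg hp (le_max_right _ _)) (mul_nonneg hq (le_max_right _ _))

lemma bermudan_key (T : ℕ) (r σ μL c b aT L0 : ℝ) :
    ∀ n, ConvexOn ℝ Set.univ (bermudanAux T r σ μL c b aT L0 n) ∧
      (∀ w, 0 ≤ bermudanAux T r σ μL c b aT L0 n w) ∧
      ∃ A C : ℝ, 0 ≤ A ∧ 0 ≤ C ∧
        ∀ w, bermudanAux T r σ μL c b aT L0 n w ≤ A * |w| + C := by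
  intro n
  induction n with
  | zero =>
    refine ⟨convexOn_exercise _, fun w => le_max_right _ _,
      1, |ABO T r b aT L0 μL T|, zero_le_one, abs_nonneg _, fun w => ?_⟩
    simp only [bermudanAux, one_mul]
    refine max_le (by cases abs_cases w <;> cases abs_cases (ABO T r b aT L0 μL T) <;> linarith) ?_
    positivity
  | succ n ih =>
    obtain ⟨hconv, hpos, A, C, hA, hC, hbd⟩ := ih
    set v := bermudanAux T r σ μL c b aT L0 n with hv
    set K := ABO T r b aT L0 μL (T - (n + 1)) with hK
    set a := c * salary L0 μL (T - (n + 1)) with ha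
    set m := r - σ ^ 2 / 2 with hm
    set γ := gaussianReal 0 1 with hγ
    have hcont : Continuous v := by
      have := hconv.continuousOn isOpen_univ
      rwa [continuousOn_univ] at this
    have hexp : Integrable (fun z => rexp (m + σ * z)) γ := by
      have := (integrable_exp_gaussian σ).const_mul (rexp m)
      refine this.congr (Filter.Eventually.of_forall fun z => ?_)
      simp [Real.exp_add]
    have hexp_nonneg : (0:ℝ) ≤ ∫ z, rexp (m + σ * z) ∂γ :=
      integral_nonneg fun z => (Real.exp_pos _).le
    set M := ∫ z, rexp (m + σ * z) ∂γ with hM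
    have hint : ∀ w : ℝ, Integrable (fun z => v ((w + a) * rexp (m + σ * z))) γ := by
      intro w
      refine Integrable.mono' ((hexp.const_mul (A * |w + a|)).add (integrable_const C)) ?_
        (Filter.Eventually.of_forall fun z => ?_)
      · exact (hcont.comp (continuous_const.mul (Real.continuous_exp.comp
          (continuous_const.add (continuous_const.mul continuous_id))))).aestronglyMeasurable
      · rw [Real.norm_eq_abs, abs_of_nonneg (hpos _)]
        calc v ((w + a) * rexp (m + σ * z)) ≤ A * |(w + a) * rexp (m + σ * z)| + C := hbd _
          _ = A * |w + a| * rexp (m + σ * z) + C := by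
              rw [abs_mul, abs_of_pos (Real.exp_pos _)]; ring
    set G := fun w : ℝ => ∫ z, v ((w + a) * rexp (m + σ * z)) ∂γ with hG
    -- convexity of G
    have hGconv : ∀ (x y p q : ℝ), 0 ≤ p → 0 ≤ q → p + q = 1 →
        G (p * x + q * y) ≤ p * G x + q * G y := by
      intro x y p q hp hq hpq
      have key : ∀ z, v ((p * x + q * y + a) * rexp (m + σ * z)) ≤
          p * v ((x + a) * rexp (m + σ * z)) + q * v ((y + a) * rexp (m + σ * z)) := by
        intro z
        have h2 := hconv.2 (Set.mem_univ ((x + a) * rexp (m + σ * z)))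
          (Set.mem_univ ((y + a) * rexp (m + σ * z))) hp hq hpq
        simp only [smul_eq_mul] at h2
        have harg : (p * x + q * y + a) * rexp (m + σ * z) =
            p * ((x + a) * rexp (m + σ * z)) + q * ((y + a) * rexp (m + σ * z)) := by
          linear_combination (-(a * rexp (m + σ * z))) * hpq
        rw [harg]
        exact h2
      calc G (p * x + q * y)
          ≤ ∫ z, (p * v ((x + a) * rexp (m + σ * z)) + q * v ((y + a) * rexp (m + σ * z))) ∂γ :=
            integral_mono_of_nonneg (Filter.Eventually.of_forall fun z => hpos _)
              (((hint x).const_mul p).add ((hint y).const_mul q))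
              (Filter.Eventually.of_forall key)
        _ = p * G x + q * G y := by
            rw [integral_add ((hint x).const_mul p) ((hint y).const_mul q),
              integral_const_mul, integral_const_mul]
    -- growth bound of G
    have hGbd : ∀ w : ℝ, G w ≤ A * |w + a| * M + C := by
      intro w
      calc G w ≤ ∫ z, (A * |w + a| * rexp (m + σ * z) + C) ∂γ := by
            refine integral_mono_of_nonneg (Filter.Eventually.of_forall fun z => hpos _)
              ((hexp.const_mul _).add (integrable_const C))
              (Filter.Eventually.of_forall fun z => ?_)
            calc v ((w + a) * rexp (m + σ * z)) ≤ A * |(w + a) * rexp (m + σ * z)| + C := hbd _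
              _ = A * |w + a| * rexp (m + σ * z) + C := by
                  rw [abs_mul, abs_of_pos (Real.exp_pos _)]; ring
        _ = A * |w + a| * M + C := by
            rw [integral_add (hexp.const_mul _) (integrable_const C),
              integral_const_mul, integral_const]
            simp [hM]
    have hGpos : ∀ w, 0 ≤ G w := fun w => integral_nonneg fun z => hpos _
    refine ⟨⟨convex_univ, fun x _ y _ p q hp hq hpq => ?_⟩, fun w => ?_, ?_⟩
    · -- convexity
      show bermudanAux T r σ μL c b aT L0 (n+1) (p • x + q • y) ≤ _
      simp only [bermudanAux, smul_eq_mul, ← hv, ← hK, ← ha, ← hm, ← hγ]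
      have h1 : max (p * x + q * y - K) 0 ≤ p * max (x - K) 0 + q * max (y - K) 0 := by
        have := (convexOn_exercise K).2 (Set.mem_univ x) (Set.mem_univ y) hp hq hpq
        simpa using this
      have h2 : rexp (-r) * G (p * x + q * y) ≤
          p * (rexp (-r) * G x) + q * (rexp (-r) * G y) := by
        have := mul_le_mul_of_nonneg_left (hGconv x y p q hp hq hpq) (Real.exp_pos (-r)).le
        nlinarith [this]
      refine max_le (h1.trans ?_) (h2.trans ?_)
      · exact add_le_add (mul_le_mul_of_nonneg_left (le_max_left _ _) hp)
          (mul_le_mul_of_nonneg_left (le_max_left _ _) hq)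
      · exact add_le_add (mul_le_mul_of_nonneg_left (le_max_right _ _) hp)
          (mul_le_mul_of_nonneg_left (le_max_right _ _) hq)
    · -- nonnegativity
      simp only [bermudanAux]
      exact le_max_of_le_left (le_max_right _ _)
    · -- growth bound
      refine ⟨max 1 (rexp (-r) * A * M), |K| + rexp (-r) * (A * M * |a| + C),
        le_trans zero_le_one (le_max_left _ _),
        by positivity, fun w => ?_⟩
      show bermudanAux T r σ μL c b aT L0 (n+1) w ≤ _
      simp only [bermudanAux, ← hv, ← hK, ← ha, ← hm, ← hγ]
      have hb1 : max (w - K) 0 ≤ |w| + |K| := by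
        refine max_le ?_ (by positivity)
        cases abs_cases w <;> cases abs_cases K <;> linarith
      have hb2 : rexp (-r) * G w ≤ rexp (-r) * A * M * |w| + rexp (-r) * (A * M * |a| + C) := by
        have h3 : G w ≤ A * |w + a| * M + C := hGbd w
        have h4 : |w + a| ≤ |w| + |a| := abs_add_le _ _
        have h5 : rexp (-r) * G w ≤ rexp (-r) * (A * (|w| + |a|) * M + C) := by
          have := mul_le_mul_of_nonneg_left h3 (Real.exp_pos (-r)).le
          nlinarith [mul_nonneg (mul_nonneg hA (abs_nonneg (w + a))) hexp_nonneg,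
            mul_le_mul_of_nonneg_left (mul_le_mul_of_nonneg_right
              (mul_le_mul_of_nonneg_left h4 hA) hexp_nonneg) (Real.exp_pos (-r)).le]
        nlinarith [h5]
      have hw_abs : 0 ≤ |w| := abs_nonneg w
      have hmax1 : (1:ℝ) ≤ max 1 (rexp (-r) * A * M) := le_max_left _ _
      have hmax2 : rexp (-r) * A * M ≤ max 1 (rexp (-r) * A * M) := le_max_right _ _
      have hpos2 : 0 ≤ rexp (-r) * (A * M * |a| + C) := by positivity
      refine max_le (hb1.trans ?_) (hb2.trans ?_)
      · nlinarith [mul_le_mul_of_nonneg_right hmax1 hw_abs]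
      · nlinarith [mul_le_mul_of_nonneg_right hmax2 hw_abs, abs_nonneg K]

/-- For every `t ∈ {0,…,T}`, the map `w ↦ v(t,w)` is convex on `[0,∞)`. -/
theorem bermudanValue_convex (T : ℕ) (hT : 1 ≤ T) (r σ μL c b aT L0 : ℝ)
    (hr : 0 ≤ r) (hσ : 0 < σ) (hμL : 0 ≤ μL) (hc : 0 < c) (hb : 0 < b)
    (haT : 0 < aT) (hL0 : 0 < L0) (t : ℕ) (ht : t ≤ T)
    (w₁ w₂ : ℝ) (hw₁ : 0 ≤ w₁) (hw₂ : 0 ≤ w₂) (lam : ℝ) (hlam0 : 0 ≤ lam) (hlam1 : lam ≤ 1) :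
    bermudanValue T r σ μL c b aT L0 t (lam * w₁ + (1 - lam) * w₂) ≤
      lam * bermudanValue T r σ μL c b aT L0 t w₁
        + (1 - lam) * bermudanValue T r σ μL c b aT L0 t w₂ := by
  have h := (bermudan_key T r σ μL c b aT L0 (T - t)).1
  have := h.2 (Set.mem_univ w₁) (Set.mem_univ w₂) hlam0 (by linarith : (0:ℝ) ≤ 1 - lam)
    (by ring : lam + (1 - lam) = 1)
  simpa [bermudanValue, smul_eq_mul] using this
end

section
/- For every t ∈ {0,…,T−1} and every w ∈ [0,∞), the value function is strictly positive: v(t,w) > 0. In particular, for 0 ≤ w ≤ K_t the continuation value strictly exceeds the exercise value max(w − K_t, 0) = 0, so it is never optimal to exercise when the DC balance is at or below the ABO. -/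
open MeasureTheory ProbabilityTheory Real

lemma gauss_exp_integrable (α : ℝ) :
    Integrable (fun z => Real.exp (α * z)) (gaussianReal 0 1) := by
  rw [gaussianReal_of_var_ne_zero 0 one_ne_zero,
    integrable_withDensity_iff (measurable_gaussianPDF 0 1)
      (ae_of_all _ fun x => ENNReal.ofReal_lt_top)]
  have h : (fun x => Real.exp (α * x) * (gaussianPDF 0 1 x).toReal)
      = fun x => ((Real.sqrt (2 * π))⁻¹ * Real.exp (α ^ 2 / 2)) *
          Real.exp (-(2:ℝ)⁻¹ * (x - α) ^ 2) := by
    ext x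
    rw [gaussianPDF, ENNReal.toReal_ofReal (gaussianPDFReal_nonneg _ _ _), gaussianPDFReal]
    push_cast
    rw [mul_one, mul_one, sub_zero]
    rw [show Real.exp (α * x) * ((Real.sqrt (2*π))⁻¹ * Real.exp (-x^2/2))
        = (Real.sqrt (2*π))⁻¹ * (Real.exp (α*x) * Real.exp (-x^2/2)) by ring,
      ← Real.exp_add, show (Real.sqrt (2*π))⁻¹ * Real.exp (α^2/2) * Real.exp (-(2:ℝ)⁻¹*(x-α)^2)
        = (Real.sqrt (2*π))⁻¹ * (Real.exp (α^2/2) * Real.exp (-(2:ℝ)⁻¹*(x-α)^2)) by ring,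
      ← Real.exp_add]
    congr 1
    ring
  rw [h]
  exact ((integrable_exp_neg_mul_sq (by norm_num : (0:ℝ) < 2⁻¹)).comp_sub_right α).const_mul _

lemma gauss_exp_shift_integrable (s α : ℝ) :
    Integrable (fun z => Real.exp (s + α * z)) (gaussianReal 0 1) := by
  have := (gauss_exp_integrable α).const_mul (Real.exp s)
  simpa [← Real.exp_add] using this

lemma gauss_Ioi_pos (z₀ : ℝ) : 0 < gaussianReal 0 1 (Set.Ioi z₀) := by
  rw [pos_iff_ne_zero]
  intro h0
  have := gaussianReal_absolutelyContinuous' 0 one_ne_zero h0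
  simp [Real.volume_Ioi] at this

lemma ABO_nonneg {T : ℕ} {r b aT L0 μL : ℝ} (hb : 0 ≤ b) (haT : 0 ≤ aT) (hL0 : 0 ≤ L0)
    (t : ℕ) : 0 ≤ ABO T r b aT L0 μL t := by
  unfold ABO
  positivity

lemma bermudanAux_nonneg (T : ℕ) (r σ μL c b aT L0 : ℝ) (n : ℕ) (w : ℝ) :
    0 ≤ bermudanAux T r σ μL c b aT L0 n w := by
  cases n with
  | zero => exact le_max_right _ _
  | succ n => exact le_trans (le_max_right _ 0) (le_max_left _ _)

/-- The growth constant. -/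
noncomputable def gB (r σ : ℝ) : ℝ :=
  max 1 (Real.exp (-r) * ∫ z, Real.exp (r - σ ^ 2 / 2 + σ * z) ∂(gaussianReal 0 1))

lemma one_le_gB (r σ : ℝ) : 1 ≤ gB r σ := le_max_left _ _

/-- Integrability of the composed value function, given monotonicity and a linear bound. -/
lemma comp_integrable_aux (T : ℕ) {r σ μL c b aT L0 : ℝ} (hσ : 0 < σ) (n : ℕ)
    (ihmono : Monotone (bermudanAux T r σ μL c b aT L0 n))
    (ihbound : ∀ w, bermudanAux T r σ μL c b aT L0 n w ≤
      gB r σ ^ n * (max w 0 + n * (c * (L0 * Real.exp (μL * T))))) (a : ℝ) :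
    Integrable
      (fun z => bermudanAux T r σ μL c b aT L0 n (a * Real.exp (r - σ ^ 2 / 2 + σ * z)))
      (gaussianReal 0 1) := by
  have hnn := bermudanAux_nonneg T r σ μL c b aT L0
  have hmeas : AEStronglyMeasurable
      (fun z => bermudanAux T r σ μL c b aT L0 n (a * Real.exp (r - σ ^ 2 / 2 + σ * z)))
      (gaussianReal 0 1) := by
    rcases le_total 0 a with ha | ha
    · refine (Monotone.measurable ?_).aestronglyMeasurable
      intro z₁ z₂ hz
      exact ihmono (mul_le_mul_of_nonneg_left
        (Real.exp_le_exp.mpr (by nlinarith)) ha)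
    · refine (Antitone.measurable ?_).aestronglyMeasurable
      intro z₁ z₂ hz
      exact ihmono (mul_le_mul_of_nonpos_left
        (Real.exp_le_exp.mpr (by nlinarith)) ha)
  refine Integrable.mono'
    (g := fun z => gB r σ ^ n * (max a 0 * Real.exp (r - σ ^ 2 / 2 + σ * z)
      + n * (c * (L0 * Real.exp (μL * T))))) ?_ hmeas (ae_of_all _ fun z => ?_)
  · exact (((gauss_exp_shift_integrable _ _).const_mul _).add (integrable_const _)).const_mul _
  · rw [Real.norm_of_nonneg (hnn _ _)]
    have h1 := ihbound (a * Real.exp (r - σ ^ 2 / 2 + σ * z))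
    rw [show max (a * Real.exp (r - σ ^ 2 / 2 + σ * z)) 0
        = max a 0 * Real.exp (r - σ ^ 2 / 2 + σ * z) by
      rw [max_mul_of_nonneg _ _ (Real.exp_nonneg _), zero_mul]] at h1
    exact h1

lemma bermudanAux_props (T : ℕ) {r σ μL c b aT L0 : ℝ}
    (hr : 0 ≤ r) (hσ : 0 < σ) (hμL : 0 ≤ μL) (hc : 0 < c) (hb : 0 < b)
    (haT : 0 < aT) (hL0 : 0 < L0) (n : ℕ) :
    Monotone (bermudanAux T r σ μL c b aT L0 n) ∧
      ∀ w, bermudanAux T r σ μL c b aT L0 n w ≤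
        gB r σ ^ n * (max w 0 + n * (c * (L0 * Real.exp (μL * T)))) := by
  set B := gB r σ with hBdef
  set M := c * (L0 * Real.exp (μL * T)) with hMdef
  have hB1 : 1 ≤ B := one_le_gB r σ
  have hB0 : 0 < B := lt_of_lt_of_le one_pos hB1
  have hM0 : 0 ≤ M := by rw [hMdef]; positivity
  induction n with
  | zero =>
    constructor
    · intro w₁ w₂ h
      exact max_le_max (by simp [h]) le_rfl
    · intro w
      simp only [pow_zero, Nat.cast_zero, zero_mul, add_zero, one_mul, bermudanAux]
      refine max_le ?_ (le_max_right _ _)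
      have h := ABO_nonneg (T := T) (r := r) (μL := μL) hb.le haT.le hL0.le T
      exact le_trans (by linarith : w - ABO T r b aT L0 μL T ≤ w) (le_max_left _ _)
  | succ n ih =>
    obtain ⟨ihmono, ihbound⟩ := ih
    have hnn := bermudanAux_nonneg T r σ μL c b aT L0
    have hint := comp_integrable_aux T hσ n ihmono ihbound
    constructor
    · intro w₁ w₂ h
      simp only [bermudanAux]
      refine max_le_max (max_le_max (by linarith) le_rfl) ?_
      refine mul_le_mul_of_nonneg_left ?_ (Real.exp_nonneg _)
      refine integral_mono_of_nonneg (ae_of_all _ fun z => hnn _ _) (hint _)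
        (ae_of_all _ fun z => ?_)
      exact ihmono (mul_le_mul_of_nonneg_right (by linarith) (Real.exp_nonneg _))
    · intro w
      simp only [bermudanAux]
      set L := c * salary L0 μL (T - (n + 1)) with hLdef
      have hL0' : 0 < L := by
        rw [hLdef]; unfold salary; positivity
      have hLM : L ≤ M := by
        rw [hLdef, hMdef]
        unfold salary
        have hc1 : ((T - (n+1) : ℕ) : ℝ) ≤ (T : ℝ) := Nat.cast_le.mpr (Nat.sub_le _ _)
        have : Real.exp (μL * ((T - (n+1) : ℕ) : ℝ)) ≤ Real.exp (μL * T) :=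
          Real.exp_le_exp.mpr (by nlinarith)
        nlinarith [Real.exp_pos (μL * ((T - (n+1) : ℕ) : ℝ))]
      set a := w + L with hadef
      set G := ∫ z, Real.exp (r - σ ^ 2 / 2 + σ * z) ∂(gaussianReal 0 1) with hGdef
      have hG0 : 0 ≤ G := integral_nonneg fun z => Real.exp_nonneg _
      have heB : Real.exp (-r) * G ≤ B := le_max_right _ _
      have her : Real.exp (-r) ≤ 1 := Real.exp_le_one_iff.mpr (by linarith)
      have ha0 : 0 ≤ max a 0 := le_max_right _ _
      -- step 1 : bound the integral
      have hIg : ∫ z, (B ^ n * (max a 0 * Real.exp (r - σ ^ 2 / 2 + σ * z) + n * M))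
            ∂(gaussianReal 0 1) = B ^ n * (max a 0 * G + n * M) := by
        rw [integral_const_mul,
          integral_add ((gauss_exp_shift_integrable _ _).const_mul _) (integrable_const _),
          integral_const_mul, integral_const]
        simp
        exact Or.inl (Or.inl rfl)
      have hstep1 : (∫ z, bermudanAux T r σ μL c b aT L0 n
            (a * Real.exp (r - σ ^ 2 / 2 + σ * z)) ∂(gaussianReal 0 1))
          ≤ B ^ n * (max a 0 * G + n * M) := by
        rw [← hIg]
        refine integral_mono_of_nonneg (ae_of_all _ fun z => hnn _ _)
          ((((gauss_exp_shift_integrable _ _).const_mul _).add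
            (integrable_const _)).const_mul _) (ae_of_all _ fun z => ?_)
        have h1 := ihbound (a * Real.exp (r - σ ^ 2 / 2 + σ * z))
        rw [show max (a * Real.exp (r - σ ^ 2 / 2 + σ * z)) 0
            = max a 0 * Real.exp (r - σ ^ 2 / 2 + σ * z) by
          rw [max_mul_of_nonneg _ _ (Real.exp_nonneg _), zero_mul]] at h1
        exact h1
      have hBn0 : (0:ℝ) ≤ B ^ n := pow_nonneg hB0.le n
      have key : Real.exp (-r) * (∫ z, bermudanAux T r σ μL c b aT L0 n
            (a * Real.exp (r - σ ^ 2 / 2 + σ * z)) ∂(gaussianReal 0 1))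
          ≤ B ^ (n + 1) * (max w 0 + (↑(n + 1)) * M) := by
        have c1 : Real.exp (-r) * (∫ z, bermudanAux T r σ μL c b aT L0 n
              (a * Real.exp (r - σ ^ 2 / 2 + σ * z)) ∂(gaussianReal 0 1))
            ≤ Real.exp (-r) * (B ^ n * (max a 0 * G + n * M)) :=
          mul_le_mul_of_nonneg_left hstep1 (Real.exp_nonneg _)
        have c2 : Real.exp (-r) * (B ^ n * (max a 0 * G + n * M))
            = B ^ n * (max a 0 * (Real.exp (-r) * G) + Real.exp (-r) * (n * M)) := by ring
        have c3 : B ^ n * (max a 0 * (Real.exp (-r) * G) + Real.exp (-r) * (n * M))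
            ≤ B ^ n * (max a 0 * B + n * M) := by
          refine mul_le_mul_of_nonneg_left (add_le_add
            (mul_le_mul_of_nonneg_left heB ha0) ?_) hBn0
          have hn0 : (0:ℝ) ≤ (n : ℝ) * M := by positivity
          nlinarith
        have c4 : B ^ n * (max a 0 * B + n * M) ≤ B ^ n * (B * (max a 0 + n * M)) := by
          refine mul_le_mul_of_nonneg_left ?_ hBn0
          have hn0 : (0:ℝ) ≤ (n : ℝ) * M := by positivity
          nlinarith
        have c5 : B ^ n * (B * (max a 0 + n * M)) = B ^ (n+1) * (max a 0 + n * M) := by ring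
        have c6 : B ^ (n+1) * (max a 0 + n * M) ≤ B ^ (n+1) * (max w 0 + (↑(n+1)) * M) := by
          refine mul_le_mul_of_nonneg_left ?_ (pow_nonneg hB0.le _)
          have hmax : max a 0 ≤ max w 0 + L := by
            refine max_le (by have := le_max_left w 0; rw [hadef]; linarith) ?_
            have := le_max_right w 0; linarith
          push_cast
          linarith
        linarith [c1, c2.le, c3, c4, c5.le, c6]
      refine max_le ?_ key
      have hK := ABO_nonneg (T := T) (r := r) (μL := μL) hb.le haT.le hL0.le (T - (n+1))
      have h1 : max (w - ABO T r b aT L0 μL (T - (n+1))) 0 ≤ max w 0 :=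
        max_le (le_trans (by linarith) (le_max_left w 0)) (le_max_right _ _)
      refine le_trans h1 ?_
      have hBn1 : (1:ℝ) ≤ B ^ (n+1) := one_le_pow₀ hB1
      have hw0 : (0:ℝ) ≤ max w 0 := le_max_right _ _
      have hn1M : (0:ℝ) ≤ (↑(n+1):ℝ) * M := by positivity
      calc max w 0 ≤ B ^ (n+1) * max w 0 := le_mul_of_one_le_left hw0 hBn1
        _ ≤ B ^ (n+1) * (max w 0 + (↑(n+1):ℝ) * M) :=
            mul_le_mul_of_nonneg_left (le_add_of_nonneg_right hn1M) (pow_nonneg hB0.le _)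

lemma bermudanAux_comp_integrable (T : ℕ) {r σ μL c b aT L0 : ℝ}
    (hr : 0 ≤ r) (hσ : 0 < σ) (hμL : 0 ≤ μL) (hc : 0 < c) (hb : 0 < b)
    (haT : 0 < aT) (hL0 : 0 < L0) (n : ℕ) (a : ℝ) :
    Integrable
      (fun z => bermudanAux T r σ μL c b aT L0 n (a * Real.exp (r - σ ^ 2 / 2 + σ * z)))
      (gaussianReal 0 1) :=
  comp_integrable_aux T hσ n (bermudanAux_props T hr hσ hμL hc hb haT hL0 n).1
    (bermudanAux_props T hr hσ hμL hc hb haT hL0 n).2 a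

lemma bermudanAux_int_pos (T : ℕ) {r σ μL c b aT L0 : ℝ}
    (hr : 0 ≤ r) (hσ : 0 < σ) (hμL : 0 ≤ μL) (hc : 0 < c) (hb : 0 < b)
    (haT : 0 < aT) (hL0 : 0 < L0) :
    ∀ n : ℕ, ∀ a : ℝ, 0 < a →
      0 < ∫ z, bermudanAux T r σ μL c b aT L0 n (a * Real.exp (r - σ ^ 2 / 2 + σ * z))
        ∂(gaussianReal 0 1) := by
  have hnn := bermudanAux_nonneg T r σ μL c b aT L0
  intro n
  induction n with
  | zero =>
    intro a ha
    rw [integral_pos_iff_support_of_nonneg (fun z => hnn _ _)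
      (bermudanAux_comp_integrable T hr hσ hμL hc hb haT hL0 0 a)]
    set K := ABO T r b aT L0 μL T with hKdef
    set z₀ := (Real.log ((|K| + 1) / a) - (r - σ ^ 2 / 2)) / σ with hz₀
    refine lt_of_lt_of_le (gauss_Ioi_pos z₀) (measure_mono fun z hz => ?_)
    have hz' : z₀ < z := hz
    have h1 : Real.log ((|K| + 1) / a) - (r - σ ^ 2 / 2) < σ * z := by
      rw [hz₀] at hz'
      calc Real.log ((|K| + 1) / a) - (r - σ ^ 2 / 2)
          = ((Real.log ((|K| + 1) / a) - (r - σ ^ 2 / 2)) / σ) * σ := by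
            field_simp
        _ < z * σ := by exact mul_lt_mul_of_pos_right hz' hσ
        _ = σ * z := by ring
    have h2 : (|K| + 1) / a < Real.exp (r - σ ^ 2 / 2 + σ * z) := by
      rw [← Real.exp_log (show (0:ℝ) < (|K| + 1) / a by positivity)]
      exact Real.exp_lt_exp.mpr (by linarith)
    have h3 : |K| + 1 < a * Real.exp (r - σ ^ 2 / 2 + σ * z) := by
      rw [div_lt_iff₀ ha] at h2
      linarith [h2]
    have h4 : 0 < a * Real.exp (r - σ ^ 2 / 2 + σ * z) - K := by
      have := le_abs_self K
      linarith
    show bermudanAux T r σ μL c b aT L0 0 (a * Real.exp (r - σ ^ 2 / 2 + σ * z)) ≠ 0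
    simp only [bermudanAux]
    exact ne_of_gt (lt_of_lt_of_le h4 (le_max_left _ _))
  | succ n ih =>
    intro a ha
    rw [integral_pos_iff_support_of_nonneg (fun z => hnn _ _)
      (bermudanAux_comp_integrable T hr hσ hμL hc hb haT hL0 (n+1) a)]
    have hsup : Function.support
        (fun z => bermudanAux T r σ μL c b aT L0 (n+1)
          (a * Real.exp (r - σ ^ 2 / 2 + σ * z))) = Set.univ := by
      refine Set.eq_univ_iff_forall.mpr fun z => ?_
      have hpos : 0 < bermudanAux T r σ μL c b aT L0 (n+1)
          (a * Real.exp (r - σ ^ 2 / 2 + σ * z)) := by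
        simp only [bermudanAux]
        have hL : 0 < c * salary L0 μL (T - (n+1)) := by unfold salary; positivity
        have ha' : 0 < a * Real.exp (r - σ ^ 2 / 2 + σ * z)
            + c * salary L0 μL (T - (n+1)) := by positivity
        refine lt_of_lt_of_le (mul_pos (Real.exp_pos _) (ih _ ha')) (le_max_right _ _)
      exact hpos.ne'
    rw [hsup]
    simp [measure_univ]

/-- For every `t ∈ {0,…,T−1}` and `w ∈ [0,∞)`, `v(t,w) > 0`; in particular, for
`0 ≤ w ≤ K_t` the continuation value strictly exceeds the exercise value
`max(w − K_t, 0) = 0`, so it is never optimal to exercise when the DC balance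
is at or below the ABO. -/
theorem bermudanValue_pos (T : ℕ) (hT : 1 ≤ T) (r σ μL c b aT L0 : ℝ)
    (hr : 0 ≤ r) (hσ : 0 < σ) (hμL : 0 ≤ μL) (hc : 0 < c) (hb : 0 < b)
    (haT : 0 < aT) (hL0 : 0 < L0) (t : ℕ) (ht : t < T) (w : ℝ) (hw : 0 ≤ w) :
    0 < bermudanValue T r σ μL c b aT L0 t w ∧
    (w ≤ ABO T r b aT L0 μL t →
      max (w - ABO T r b aT L0 μL t) 0 <
        Real.exp (-r) *
          ∫ z, bermudanValue T r σ μL c b aT L0 (t + 1)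
              ((w + c * salary L0 μL t) * Real.exp (r - σ ^ 2 / 2 + σ * z))
            ∂(gaussianReal 0 1)) := by
  set n := T - t - 1 with hn
  have h1 : T - t = n + 1 := by omega
  have h2 : T - (t + 1) = n := by omega
  have h3 : T - (n + 1) = t := by omega
  have ha : 0 < w + c * salary L0 μL t := by
    unfold salary; positivity
  have hI := bermudanAux_int_pos T hr hσ hμL hc hb haT hL0 n _ ha
  constructor
  · unfold bermudanValue
    rw [h1]
    simp only [bermudanAux, h3]
    exact lt_of_lt_of_le (mul_pos (Real.exp_pos _) hI) (le_max_right _ _)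
  · intro hwK
    rw [max_eq_right (by linarith : w - ABO T r b aT L0 μL t ≤ 0)]
    simp only [bermudanValue, h2]
    exact mul_pos (Real.exp_pos _) hI
end

section
/- For every t ∈ {0,…,T−1} there exists a threshold φ(t) ∈ (K_t, ∞] (the exercise boundary) such that for every w ∈ [0,∞): if w ≥ φ(t) then v(t,w) = max(w − K_t, 0) (exercise is optimal), and if w < φ(t) then v(t,w) > max(w − K_t, 0) (continuation is strictly optimal). -/
open MeasureTheory ProbabilityTheory Real

namespace BP

lemma gr_eq : gaussianReal 0 1 =
    volume.withDensity (fun x => ((gaussianPDFReal 0 1 x).toNNReal : ENNReal)) := by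
  rw [gaussianReal_of_var_ne_zero 0 one_ne_zero]; rfl

lemma meas_pdf : Measurable (fun x => (gaussianPDFReal 0 1 x).toNNReal) :=
  (measurable_gaussianPDFReal 0 1).real_toNNReal

lemma integral_gr (g : ℝ → ℝ) :
    ∫ z, g z ∂(gaussianReal 0 1) = ∫ z, gaussianPDFReal 0 1 z * g z := by
  rw [gr_eq, integral_withDensity_eq_integral_smul meas_pdf]
  congr 1; ext z
  simp [NNReal.smul_def, Real.coe_toNNReal _ (gaussianPDFReal_nonneg 0 1 z)]

lemma integrable_gr_iff (g : ℝ → ℝ) :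
    Integrable g (gaussianReal 0 1) ↔
      Integrable (fun z => gaussianPDFReal 0 1 z * g z) volume := by
  rw [gr_eq, integrable_withDensity_iff_integrable_smul meas_pdf]
  apply integrable_congr
  filter_upwards with z
  simp [NNReal.smul_def, Real.coe_toNNReal _ (gaussianPDFReal_nonneg 0 1 z)]

lemma pdf_mul_exp (s z : ℝ) :
    gaussianPDFReal 0 1 z * Real.exp (s * z)
      = Real.exp (s ^ 2 / 2) * gaussianPDFReal s 1 z := by
  simp only [gaussianPDFReal, NNReal.coe_one, mul_one, sub_zero]
  rw [mul_assoc, ← Real.exp_add,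
    show rexp (s ^ 2 / 2) * ((√(2 * π))⁻¹ * rexp (-(z - s) ^ 2 / 2))
      = (√(2 * π))⁻¹ * rexp (s ^ 2 / 2 + -(z - s) ^ 2 / 2) by rw [Real.exp_add]; ring]
  congr 1; ring

lemma integrable_exp_gr (s : ℝ) :
    Integrable (fun z => Real.exp (s * z)) (gaussianReal 0 1) := by
  rw [integrable_gr_iff]
  simp only [pdf_mul_exp]
  exact (integrable_gaussianPDFReal s 1).const_mul _

lemma integral_exp_gr (s : ℝ) :
    ∫ z, Real.exp (s * z) ∂(gaussianReal 0 1) = Real.exp (s ^ 2 / 2) := by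
  rw [integral_gr]
  simp only [pdf_mul_exp]
  rw [integral_const_mul, integral_gaussianPDFReal_eq_one s one_ne_zero, mul_one]

lemma integrable_E (A s : ℝ) :
    Integrable (fun z => Real.exp (A + s * z)) (gaussianReal 0 1) := by
  simp only [Real.exp_add]
  exact (integrable_exp_gr s).const_mul _

lemma integral_E (r σ : ℝ) :
    ∫ z, Real.exp (r - σ ^ 2 / 2 + σ * z) ∂(gaussianReal 0 1) = Real.exp r := by
  simp only [Real.exp_add]
  rw [integral_const_mul, integral_exp_gr, ← Real.exp_add]
  congr 1; ring

lemma gr_Ioi_pos (a : ℝ) : 0 < (gaussianReal 0 1) (Set.Ioi a) := by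
  rw [gaussianReal_apply 0 one_ne_zero,
    lintegral_pos_iff_support (measurable_gaussianPDF 0 1)]
  have h : Function.support (gaussianPDF 0 1) = Set.univ :=
    Set.eq_univ_of_forall fun x => (gaussianPDF_pos 0 one_ne_zero x).ne'
  rw [h, Measure.restrict_apply_univ, Real.volume_Ioi]
  simp

/-- Integrability of a Lipschitz function composed with the lognormal factor. -/
lemma integrable_comp {f : ℝ → ℝ} (hf : LipschitzWith 1 f) (x A s : ℝ) :
    Integrable (fun z => f (x * Real.exp (A + s * z))) (gaussianReal 0 1) := by
  have hbd : ∀ z : ℝ, ‖f (x * Real.exp (A + s * z))‖ ≤ |f 0| + |x| * Real.exp (A + s * z) := by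
    intro z
    have h1 : |f (x * Real.exp (A + s * z)) - f 0| ≤ |x| * Real.exp (A + s * z) := by
      have := hf.dist_le_mul (x * Real.exp (A + s * z)) 0
      simpa [Real.dist_eq, abs_mul, abs_of_pos (Real.exp_pos (A + s * z))] using this
    rw [Real.norm_eq_abs]
    calc |f (x * Real.exp (A + s * z))|
        ≤ |f 0| + |f (x * Real.exp (A + s * z)) - f 0| := by
          have := abs_sub_abs_le_abs_sub (f (x * Real.exp (A + s * z))) (f 0)
          linarith
      _ ≤ |f 0| + |x| * Real.exp (A + s * z) := by linarith
  refine Integrable.mono' ((integrable_const |f 0|).add ((integrable_E A s).const_mul |x|)) ?_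
    (Filter.Eventually.of_forall hbd)
  exact (hf.continuous.comp (by continuity)).aestronglyMeasurable

/-- 1-Lipschitz-ness of the continuation map. -/
lemma lip_cont {f : ℝ → ℝ} (hf : LipschitzWith 1 f) (r σ s : ℝ) :
    LipschitzWith 1 (fun w =>
      Real.exp (-r) *
        ∫ z, f ((w + s) * Real.exp (r - σ ^ 2 / 2 + σ * z)) ∂(gaussianReal 0 1)) := by
  refine LipschitzWith.of_dist_le_mul fun w1 w2 => ?_
  have hi1 := integrable_comp hf (w1 + s) (r - σ ^ 2 / 2) σ
  have hi2 := integrable_comp hf (w2 + s) (r - σ ^ 2 / 2) σ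
  rw [Real.dist_eq, Real.dist_eq, ← mul_sub, ← integral_sub hi1 hi2]
  have hb : ∀ z : ℝ, ‖f ((w1 + s) * Real.exp (r - σ ^ 2 / 2 + σ * z))
        - f ((w2 + s) * Real.exp (r - σ ^ 2 / 2 + σ * z))‖
      ≤ |w1 - w2| * Real.exp (r - σ ^ 2 / 2 + σ * z) := by
    intro z
    have h := hf.dist_le_mul ((w1 + s) * Real.exp (r - σ ^ 2 / 2 + σ * z))
      ((w2 + s) * Real.exp (r - σ ^ 2 / 2 + σ * z))
    rw [Real.dist_eq, Real.dist_eq, NNReal.coe_one, one_mul, ← sub_mul, abs_mul,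
      abs_of_pos (Real.exp_pos _)] at h
    rw [Real.norm_eq_abs]
    calc |f ((w1 + s) * Real.exp (r - σ ^ 2 / 2 + σ * z))
          - f ((w2 + s) * Real.exp (r - σ ^ 2 / 2 + σ * z))|
        ≤ |w1 + s - (w2 + s)| * Real.exp (r - σ ^ 2 / 2 + σ * z) := h
      _ = |w1 - w2| * Real.exp (r - σ ^ 2 / 2 + σ * z) := by ring_nf
  have habs : ‖∫ z, (f ((w1 + s) * Real.exp (r - σ ^ 2 / 2 + σ * z))
        - f ((w2 + s) * Real.exp (r - σ ^ 2 / 2 + σ * z))) ∂(gaussianReal 0 1)‖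
      ≤ ∫ z, |w1 - w2| * Real.exp (r - σ ^ 2 / 2 + σ * z) ∂(gaussianReal 0 1) := by
    refine (norm_integral_le_integral_norm _).trans ?_
    refine integral_mono (hi1.sub hi2).norm ?_ hb
    have := (integrable_E (r - σ ^ 2 / 2) σ).const_mul |w1 - w2|
    simpa [mul_comm] using this
  rw [Real.norm_eq_abs] at habs
  have hint : ∫ z, |w1 - w2| * Real.exp (r - σ ^ 2 / 2 + σ * z) ∂(gaussianReal 0 1)
      = |w1 - w2| * Real.exp r := by
    rw [integral_const_mul, integral_E r σ]
  rw [hint] at habs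
  rw [abs_mul, abs_of_pos (Real.exp_pos (-r))]
  have hkey : Real.exp (-r) * (|w1 - w2| * Real.exp r) = |w1 - w2| := by
    rw [mul_comm (|w1 - w2|), ← mul_assoc, ← Real.exp_add]
    simp
  calc Real.exp (-r) * |∫ z, (f ((w1 + s) * Real.exp (r - σ ^ 2 / 2 + σ * z))
          - f ((w2 + s) * Real.exp (r - σ ^ 2 / 2 + σ * z))) ∂(gaussianReal 0 1)|
      ≤ Real.exp (-r) * (|w1 - w2| * Real.exp r) :=
        mul_le_mul_of_nonneg_left habs (le_of_lt (Real.exp_pos _))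
    _ = 1 * |w1 - w2| := by rw [hkey, one_mul]

/-- positivity of the integral of the payoff lower bound -/
lemma pos_payoff {x : ℝ} (hx : 0 < x) {σ : ℝ} (hσ : 0 < σ) (A K : ℝ) :
    0 < ∫ z, max (x * Real.exp (A + σ * z) - K) 0 ∂(gaussianReal 0 1) := by
  set g := fun z => max (x * Real.exp (A + σ * z) - K) 0 with hg
  have hg0 : 0 ≤ g := fun z => le_max_right _ _
  have hgint : Integrable g (gaussianReal 0 1) := by
    refine Integrable.mono' ((integrable_const |K|).add ((integrable_E A σ).const_mul x)) ?_
      (Filter.Eventually.of_forall fun z => ?_)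
    · exact (by continuity : Continuous g).aestronglyMeasurable
    · simp only [Pi.add_apply]
      rw [Real.norm_eq_abs, abs_of_nonneg (hg0 z)]
      have h1 : -|K| ≤ K := neg_abs_le K
      have h2 : 0 < x * Real.exp (A + σ * z) := by positivity
      exact max_le (by nlinarith) (by positivity)
  rw [integral_pos_iff_support_of_nonneg hg0 hgint]
  set z1 := (Real.log ((|K| + 1) / x) - A) / σ with hz1
  refine lt_of_lt_of_le (gr_Ioi_pos z1) (measure_mono ?_)
  intro z hz
  rw [Set.mem_Ioi] at hz
  have hz' : Real.log ((|K| + 1) / x) < A + σ * z := by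
    have h3 : σ * z1 = Real.log ((|K| + 1) / x) - A := by
      rw [hz1]; field_simp
    nlinarith [mul_lt_mul_of_pos_left hz hσ]
  have hpos : (|K| + 1) / x < Real.exp (A + σ * z) :=
    (Real.log_lt_iff_lt_exp (by positivity)).mp hz'
  have hK : K ≤ |K| := le_abs_self K
  have h4 : |K| + 1 < x * Real.exp (A + σ * z) := by
    rw [div_lt_iff₀ hx] at hpos; nlinarith
  have : 0 < g z := lt_max_of_lt_left (by linarith)
  exact Function.mem_support.mpr this.ne'

lemma integrable_payoff (x A σ K : ℝ) :
    Integrable (fun z => max (x * Real.exp (A + σ * z) - K) 0) (gaussianReal 0 1) := by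
  refine Integrable.mono' ((integrable_const |K|).add ((integrable_E A σ).const_mul |x|)) ?_
    (Filter.Eventually.of_forall fun z => ?_)
  · exact (by continuity : Continuous fun z => max (x * Real.exp (A + σ * z) - K) 0
      ).aestronglyMeasurable
  · simp only [Pi.add_apply]
    have h1 : -|K| ≤ K := neg_abs_le K
    have h2 : x * Real.exp (A + σ * z) ≤ |x| * Real.exp (A + σ * z) :=
      mul_le_mul_of_nonneg_right (le_abs_self x) (le_of_lt (Real.exp_pos _))
    have h3 : 0 < Real.exp (A + σ * z) := Real.exp_pos _
    rw [Real.norm_eq_abs, abs_of_nonneg (le_max_right _ 0)]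
    refine max_le (by nlinarith [abs_nonneg x]) (by positivity)

lemma lip_max_sub (K : ℝ) : LipschitzWith 1 (fun w : ℝ => max (w - K) 0) := by
  refine LipschitzWith.of_dist_le_mul fun a b => ?_
  rw [Real.dist_eq, Real.dist_eq, NNReal.coe_one, one_mul]
  calc |max (a - K) 0 - max (b - K) 0| ≤ |(a - K) - (b - K)| := abs_max_sub_max_le_abs _ _ _
    _ = |a - b| := by ring_nf

lemma aux_zero (T : ℕ) (r σ μL c b aT L0 : ℝ) :
    bermudanAux T r σ μL c b aT L0 0 = fun w => max (w - ABO T r b aT L0 μL T) 0 := rfl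

lemma aux_succ (T : ℕ) (r σ μL c b aT L0 : ℝ) (n : ℕ) :
    bermudanAux T r σ μL c b aT L0 (n + 1) = fun w =>
      max (max (w - ABO T r b aT L0 μL (T - (n + 1))) 0)
        (Real.exp (-r) *
          ∫ z, bermudanAux T r σ μL c b aT L0 n
              ((w + c * salary L0 μL (T - (n + 1))) * Real.exp (r - σ ^ 2 / 2 + σ * z))
            ∂(gaussianReal 0 1)) := rfl

lemma lip_aux (T : ℕ) (r σ μL c b aT L0 : ℝ) :
    ∀ n, LipschitzWith 1 (bermudanAux T r σ μL c b aT L0 n) := by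
  intro n
  induction n with
  | zero => rw [aux_zero]; exact lip_max_sub _
  | succ n ih =>
      rw [aux_succ]
      have h := (lip_max_sub (ABO T r b aT L0 μL (T - (n + 1)))).max
        (lip_cont ih r σ (c * salary L0 μL (T - (n + 1))))
      simpa using h

lemma lb_aux (T : ℕ) (r σ μL c b aT L0 : ℝ) :
    ∀ n w, max (w - ABO T r b aT L0 μL (T - n)) 0 ≤ bermudanAux T r σ μL c b aT L0 n w := by
  intro n w
  cases n with
  | zero => rw [aux_zero]; simp
  | succ n => rw [aux_succ]; exact le_max_left _ _



end BP

/-- For every `t ∈ {0,…,T−1}` there exists an exercise boundary `φ(t) ∈ (K_t, ∞]`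
such that for every `w ∈ [0,∞)`: if `w ≥ φ(t)` then `v(t,w) = max(w − K_t, 0)`
(exercise is optimal), and if `w < φ(t)` then `v(t,w) > max(w − K_t, 0)`
(continuation is strictly optimal). -/
theorem bermudanValue_exercise_boundary (T : ℕ) (hT : 1 ≤ T) (r σ μL c b aT L0 : ℝ)
    (hr : 0 ≤ r) (hσ : 0 < σ) (hμL : 0 ≤ μL) (hc : 0 < c) (hb : 0 < b)
    (haT : 0 < aT) (hL0 : 0 < L0) (t : ℕ) (ht : t < T) :
    ∃ φ : EReal, (ABO T r b aT L0 μL t : EReal) < φ ∧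
      ∀ w : ℝ, 0 ≤ w →
        (φ ≤ (w : EReal) →
          bermudanValue T r σ μL c b aT L0 t w = max (w - ABO T r b aT L0 μL t) 0) ∧
        ((w : EReal) < φ →
          max (w - ABO T r b aT L0 μL t) 0 < bermudanValue T r σ μL c b aT L0 t w) := by
  obtain ⟨n, hn⟩ : ∃ n, T - t = n + 1 := ⟨T - t - 1, by omega⟩
  have hidx : T - (n + 1) = t := by omega
  set K := ABO T r b aT L0 μL t with hK
  set s := c * salary L0 μL t with hs
  set f := bermudanAux T r σ μL c b aT L0 n with hf
  set Cont := fun w : ℝ => Real.exp (-r) *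
      ∫ z, f ((w + s) * Real.exp (r - σ ^ 2 / 2 + σ * z)) ∂(gaussianReal 0 1) with hCont
  have hspos : 0 < s := by
    rw [hs]; unfold salary; positivity
  have hval : ∀ w, bermudanValue T r σ μL c b aT L0 t w = max (max (w - K) 0) (Cont w) := by
    intro w
    rw [bermudanValue, hn, BP.aux_succ, hidx]
  have hflip : LipschitzWith 1 f := BP.lip_aux T r σ μL c b aT L0 n
  have hlip : LipschitzWith 1 Cont := BP.lip_cont hflip r σ s
  have hfnn : ∀ y : ℝ, 0 ≤ f y := fun y =>
    le_trans (le_max_right _ 0) (BP.lb_aux T r σ μL c b aT L0 n y)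
  have hCont0 : ∀ w : ℝ, 0 ≤ Cont w := by
    intro w
    have : 0 ≤ ∫ z, f ((w + s) * Real.exp (r - σ ^ 2 / 2 + σ * z)) ∂(gaussianReal 0 1) :=
      integral_nonneg fun z => hfnn _
    positivity
  have hContpos : ∀ w : ℝ, 0 ≤ w → 0 < Cont w := by
    intro w hw
    have hx : 0 < w + s := by linarith
    have hpp := BP.pos_payoff hx hσ (r - σ ^ 2 / 2) (ABO T r b aT L0 μL (T - n))
    have hle : ∫ z, max ((w + s) * Real.exp (r - σ ^ 2 / 2 + σ * z)
          - ABO T r b aT L0 μL (T - n)) 0 ∂(gaussianReal 0 1)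
        ≤ ∫ z, f ((w + s) * Real.exp (r - σ ^ 2 / 2 + σ * z)) ∂(gaussianReal 0 1) := by
      refine integral_mono (BP.integrable_payoff _ _ _ _)
        (BP.integrable_comp hflip (w + s) (r - σ ^ 2 / 2) σ) fun z => ?_
      exact BP.lb_aux T r σ μL c b aT L0 n _
    exact mul_pos (Real.exp_pos _) (lt_of_lt_of_le hpp hle)
  have hK0 : 0 ≤ K := by
    rw [hK]; unfold ABO
    have h1 : (0:ℝ) ≤ (t:ℝ) := Nat.cast_nonneg t
    positivity
  have hmono : ∀ w1 w2 : ℝ, w1 ≤ w2 → Cont w2 - Cont w1 ≤ w2 - w1 := by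
    intro w1 w2 h12
    have h := hlip.dist_le_mul w2 w1
    rw [Real.dist_eq, Real.dist_eq, NNReal.coe_one, one_mul] at h
    have h1 := le_abs_self (Cont w2 - Cont w1)
    have h2 : |w2 - w1| = w2 - w1 := abs_of_nonneg (by linarith)
    linarith
  set S := {w : ℝ | Cont w + K ≤ w} with hS
  have hSc : IsClosed S := isClosed_le (hlip.continuous.add continuous_const) continuous_id
  rcases Set.eq_empty_or_nonempty S with hSe | hSne
  · refine ⟨⊤, EReal.coe_lt_top K, fun w hw => ⟨fun h => ?_, fun _ => ?_⟩⟩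
    · exact absurd h (not_le.mpr (EReal.coe_lt_top w))
    · rw [hval w]
      have hw1 : ¬ (Cont w + K ≤ w) := fun hc =>
        Set.eq_empty_iff_forall_notMem.mp hSe w hc
      push_neg at hw1
      exact lt_of_lt_of_le (max_lt (by linarith) (hContpos w hw)) (le_max_right _ _)
  · set φ0 := sInf S with hφ0
    have hbdd : BddBelow S := ⟨K, fun w hw => by
      simp only [hS, Set.mem_setOf_eq] at hw
      have := hCont0 w; linarith⟩
    have hmem : φ0 ∈ S := hSc.csInf_mem hSne hbdd
    have hφmem : Cont φ0 + K ≤ φ0 := hmem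
    have hφ00 : 0 ≤ φ0 := by have := hCont0 φ0; linarith
    have hφ0K : K < φ0 := by have := hContpos φ0 hφ00; linarith
    refine ⟨(φ0 : ℝ), by exact_mod_cast hφ0K, fun w hw => ⟨fun h => ?_, fun h => ?_⟩⟩
    · have hwφ : φ0 ≤ w := by exact_mod_cast h
      have hcw : Cont w ≤ w - K := by have := hmono φ0 w hwφ; linarith
      rw [hval w]
      exact max_eq_left (hcw.trans (le_max_left _ _))
    · have hwφ : w < φ0 := by exact_mod_cast h
      have hw1 : ¬ (Cont w + K ≤ w) := fun hc => absurd (csInf_le hbdd hc) (not_le.mpr hwφ)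
      push_neg at hw1
      rw [hval w]
      exact lt_of_lt_of_le (max_lt (by linarith) (hContpos w hw)) (le_max_right _ _)
end

section
/- Existence and uniqueness of the crossing time: assume r > 0, μ_L ≥ 0, b, ä, L₀ > 0, T > 0, and c > b·ä·e^{−rT}. Then there exists a unique t' > 0 such that f(t') = 0, where f(s) = (s+1)·b·L₀·e^{μ_L s}·ä·e^{−r(T−s)} − s·b·L₀·e^{μ_L (s−1)}·ä·e^{−r(T−s)} − c·L₀·e^{μ_L s}; moreover f(s) < 0 for all s ∈ [0, t'), f(s) > 0 for all s > t', and t' ≤ (1/r)·ln( c/(b·ä·e^{−rT}) ). -/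
open Real

/-- The boundary-classifying function
`f(s) = (s+1)·b·L₀·e^{μ_L s}·ä·e^{−r(T−s)} − s·b·L₀·e^{μ_L(s−1)}·ä·e^{−r(T−s)} − c·L₀·e^{μ_L s}`,
the asymptotic excess of exercise value over continuation value at time `s`. -/
noncomputable def boundaryFun (T r μL c b aT L0 : ℝ) (s : ℝ) : ℝ :=
  (s + 1) * b * (L0 * Real.exp (μL * s)) * aT * Real.exp (-r * (T - s))
    - s * b * (L0 * Real.exp (μL * (s - 1))) * aT * Real.exp (-r * (T - s))
    - c * (L0 * Real.exp (μL * s))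

/-- Existence and uniqueness of the crossing time: if `r > 0`, `μ_L ≥ 0`,
`b, ä, L₀ > 0`, `T > 0` and `c > b·ä·e^{−rT}`, then there is a unique `t' > 0`
with `f(t') = 0`; moreover `f < 0` on `[0, t')`, `f > 0` on `(t', ∞)`, and
`t' ≤ (1/r)·ln(c/(b·ä·e^{−rT}))`. -/
theorem boundary_crossing_time (T r μL c b aT L0 : ℝ)
    (hr : 0 < r) (hμL : 0 ≤ μL) (hb : 0 < b) (haT : 0 < aT) (hL0 : 0 < L0)
    (hT : 0 < T) (hc : b * aT * Real.exp (-r * T) < c) :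
    ∃ t' : ℝ, 0 < t' ∧ boundaryFun T r μL c b aT L0 t' = 0 ∧
      (∀ s : ℝ, 0 < s → boundaryFun T r μL c b aT L0 s = 0 → s = t') ∧
      (∀ s : ℝ, 0 ≤ s → s < t' → boundaryFun T r μL c b aT L0 s < 0) ∧
      (∀ s : ℝ, t' < s → 0 < boundaryFun T r μL c b aT L0 s) ∧
      t' ≤ (1 / r) * Real.log (c / (b * aT * Real.exp (-r * T))) := by
  set A := b * aT * Real.exp (-r * T) with hA
  have hApos : 0 < A := by positivity
  have hcpos : 0 < c := hApos.trans hc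
  set k := 1 - Real.exp (-μL) with hk
  have hk0 : 0 ≤ k := by
    have h1 : Real.exp (-μL) ≤ Real.exp 0 := Real.exp_le_exp.mpr (by linarith)
    simp only [Real.exp_zero] at h1
    simp only [hk]; linarith
  set g : ℝ → ℝ := fun s => A * Real.exp (r * s) * (1 + k * s) - c with hg
  have key : ∀ s, boundaryFun T r μL c b aT L0 s = L0 * Real.exp (μL * s) * g s := by
    intro s
    simp only [boundaryFun, hg, hA, hk]
    rw [show μL * (s - 1) = μL * s + (-μL) by ring, Real.exp_add,
        show -r * (T - s) = -r * T + r * s by ring, Real.exp_add]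
    ring
  have hmono : StrictMonoOn g (Set.Ici (0:ℝ)) := by
    intro x hx y hy hxy
    have hx0 : (0:ℝ) ≤ x := hx
    simp only [hg]
    have h1 : Real.exp (r * x) < Real.exp (r * y) :=
      Real.exp_lt_exp.mpr (by nlinarith)
    have hex : 0 < Real.exp (r * x) := Real.exp_pos _
    have hey : 0 < Real.exp (r * y) := Real.exp_pos _
    have hkx : 0 < 1 + k * x := by nlinarith [mul_nonneg hk0 hx0]
    have step1 : A * Real.exp (r * x) * (1 + k * x) < A * Real.exp (r * y) * (1 + k * x) :=
      mul_lt_mul_of_pos_right (mul_lt_mul_of_pos_left h1 hApos) hkx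
    have step2 : A * Real.exp (r * y) * (1 + k * x) ≤ A * Real.exp (r * y) * (1 + k * y) := by
      apply mul_le_mul_of_nonneg_left _ (by positivity)
      nlinarith [mul_le_mul_of_nonneg_left hxy.le hk0]
    linarith
  set s₀ := (1 / r) * Real.log (c / A) with hs₀
  have hrs₀ : r * s₀ = Real.log (c / A) := by
    rw [hs₀]; field_simp
  have hlogpos : 0 < Real.log (c / A) := Real.log_pos (by rw [lt_div_iff₀ hApos]; linarith)
  have hs₀pos : 0 < s₀ := by
    rw [hs₀]; positivity
  have hg0 : g 0 < 0 := by
    simp only [hg, mul_zero, Real.exp_zero, mul_one, add_zero]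
    linarith
  have hgs₀ : 0 ≤ g s₀ := by
    simp only [hg]
    rw [hrs₀, Real.exp_log (by positivity)]
    have hAc : A * (c / A) = c := by field_simp
    rw [hAc]
    nlinarith [mul_nonneg (mul_nonneg hcpos.le hk0) hs₀pos.le]
  have hcont : ContinuousOn g (Set.Icc 0 s₀) := by
    apply Continuous.continuousOn
    simp only [hg]
    continuity
  have hmem : (0:ℝ) ∈ Set.Icc (g 0) (g s₀) := ⟨hg0.le, hgs₀⟩
  obtain ⟨t', ht'mem, ht'zero⟩ := intermediate_value_Icc hs₀pos.le hcont hmem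
  have ht'0 : 0 ≤ t' := ht'mem.1
  have ht'pos : 0 < t' := by
    rcases lt_or_eq_of_le ht'0 with h | h
    · exact h
    · exfalso; rw [← h] at ht'zero; linarith
  refine ⟨t', ht'pos, ?_, ?_, ?_, ?_, ht'mem.2⟩
  · rw [key]; rw [ht'zero]; ring
  · intro s hs hfs
    rw [key] at hfs
    have hgs : g s = 0 := by
      have hpos : 0 < L0 * Real.exp (μL * s) := by positivity
      rcases mul_eq_zero.mp hfs with h | h
      · exact absurd h (ne_of_gt hpos)
      · exact h
    exact hmono.injOn (Set.mem_Ici.mpr hs.le) (Set.mem_Ici.mpr ht'0)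
      (by rw [hgs, ht'zero])
  · intro s hs0 hst
    rw [key]
    have : g s < g t' := hmono (Set.mem_Ici.mpr hs0) (Set.mem_Ici.mpr ht'0) hst
    rw [ht'zero] at this
    exact mul_neg_of_pos_of_neg (by positivity) this
  · intro s hts
    rw [key]
    have : g t' < g s := hmono (Set.mem_Ici.mpr ht'0) (Set.mem_Ici.mpr (ht'0.trans hts.le)) hts
    rw [ht'zero] at this
    exact mul_pos (by positivity) this
end

section
/- If b, ä, L₀ > 0, μ_L ≥ 0, T ≥ 1 is an integer, r ∈ ℝ, and c > b·ä·((1 − e^{−μ_L})·T + e^{−μ_L})·e^{−r}, then T·b·L_{T−1}·ä·e^{−r} − (T−1)·b·L_{T−2}·ä·e^{−r} − c·L_{T−1} < 0, where L_t = L₀·e^{μ_L t}. (That is, f(T−1) < 0, so exercise is never optimal before retirement and the Bermudan DB underpin option reduces to the ordinary DB underpin option; Proposition 3 part (iv).) -/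
open Real

/-- If `c > b·ä·((1 − e^{−μ_L})·T + e^{−μ_L})·e^{−r}` then
`T·b·L_{T−1}·ä·e^{−r} − (T−1)·b·L_{T−2}·ä·e^{−r} − c·L_{T−1} < 0`, where
`L_t = L₀·e^{μ_L t}`; i.e. `f(T−1) < 0`, so exercise is never optimal before
retirement and the Bermudan DB underpin reduces to the ordinary DB underpin. -/
theorem no_early_exercise_condition (T : ℕ) (hT : 1 ≤ T) (r μL c b aT L0 : ℝ)
    (hμL : 0 ≤ μL) (hb : 0 < b) (haT : 0 < aT) (hL0 : 0 < L0)
    (hc : b * aT * ((1 - Real.exp (-μL)) * (T : ℝ) + Real.exp (-μL)) * Real.exp (-r) < c) :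
    (T : ℝ) * b * (L0 * Real.exp (μL * ((T : ℝ) - 1))) * aT * Real.exp (-r)
      - ((T : ℝ) - 1) * b * (L0 * Real.exp (μL * ((T : ℝ) - 2))) * aT * Real.exp (-r)
      - c * (L0 * Real.exp (μL * ((T : ℝ) - 1))) < 0 := by
  have h2 : Real.exp (μL * ((T : ℝ) - 2)) = Real.exp (μL * ((T : ℝ) - 1)) * Real.exp (-μL) := by
    rw [← Real.exp_add]; ring_nf
  rw [h2]
  have hE : 0 < Real.exp (μL * ((T : ℝ) - 1)) := Real.exp_pos _
  have key : b * aT * ((1 - Real.exp (-μL)) * (T : ℝ) + Real.exp (-μL)) * Real.exp (-r) - c < 0 :=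
    by linarith
  have hL : 0 < L0 * Real.exp (μL * ((T : ℝ) - 1)) := by positivity
  nlinarith [mul_neg_of_pos_of_neg hL key]
end

section
/- Obstruction to early exercise in the continuous-time formulation: let r ≥ 0, b, ä > 0, T > 0 and suppose c > b·ä·(1 + rT). Then for every t ∈ [0,T], b·ä·e^{−r(T−t)}·(1 + r·t) < c; that is, the function f(t) = b·ä·e^{−r(T−t)} + r·t·b·ä·e^{−r(T−t)} − c is strictly negative on all of [0,T]. (Consequently the variational inequality cannot hold with the exercise payoff anywhere, the continuation region is everything, and the Bermudan DB underpin option is equivalent to the European DB underpin option.) -/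
open Real

/-- Obstruction to early exercise in the continuous-time formulation: if
`r ≥ 0`, `b, ä > 0`, `T > 0` and `c > b·ä·(1 + rT)`, then for every
`t ∈ [0,T]`, `b·ä·e^{−r(T−t)}·(1 + r·t) < c`; that is,
`f(t) = b·ä·e^{−r(T−t)} + r·t·b·ä·e^{−r(T−t)} − c < 0` on all of `[0,T]`,
so the continuation region is everything and the Bermudan DB underpin option
is equivalent to the European DB underpin option. -/
theorem continuous_no_early_exercise (r c b aT T : ℝ)
    (hr : 0 ≤ r) (hb : 0 < b) (haT : 0 < aT) (hT : 0 < T)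
    (hc : b * aT * (1 + r * T) < c) :
    ∀ t : ℝ, 0 ≤ t → t ≤ T → b * aT * Real.exp (-r * (T - t)) * (1 + r * t) < c := by
  intro t ht htT
  have hexp : Real.exp (-r * (T - t)) ≤ 1 := by
    apply Real.exp_le_one_iff.mpr
    nlinarith
  have h1 : 0 < 1 + r * t := by nlinarith
  have hba : 0 < b * aT := mul_pos hb haT
  calc b * aT * Real.exp (-r * (T - t)) * (1 + r * t)
      ≤ b * aT * 1 * (1 + r * t) := by
        apply mul_le_mul_of_nonneg_right _ h1.le
        exact mul_le_mul_of_nonneg_left hexp hba.le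
    _ ≤ b * aT * (1 + r * T) := by nlinarith [mul_nonneg (mul_nonneg hba.le hr) (sub_nonneg.mpr htT)]
    _ < c := hc
end

section
/- Optimal switching time for the Florida second election option (stochastic salary, continuous time): let r > 0, b, ä, c > 0 and 0 ≤ t ≤ T. Define g : [t,T] → ℝ by g(s) = c·(s − t) − s·b·ä·e^{−r(T−s)}. Suppose t' ≥ 0 satisfies c = b·ä·e^{−r(T−t')}·(1 + r·t'). Then s* = max(min(T, t'), t) maximizes g on [t,T]: g(s*) ≥ g(s) for all s ∈ [t,T]. -/
open Real

/-- Optimal switching time for the Florida second election option (stochastic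
salary, continuous time): with `g(s) = c·(s − t) − s·b·ä·e^{−r(T−s)}` and `t'`
a root of `c = b·ä·e^{−r(T−t')}·(1 + r·t')`, the clamp
`s* = max(min(T, t'), t)` maximizes `g` on `[t,T]`. -/
theorem florida_optimal_switching_stochastic (r b aT c T t t' : ℝ)
    (hr : 0 < r) (hb : 0 < b) (haT : 0 < aT) (hc : 0 < c)
    (ht0 : 0 ≤ t) (htT : t ≤ T) (ht' : 0 ≤ t')
    (hroot : c = b * aT * Real.exp (-r * (T - t')) * (1 + r * t')) :
    ∀ s : ℝ, t ≤ s → s ≤ T →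
      c * (s - t) - s * b * aT * Real.exp (-r * (T - s)) ≤
        c * (max (min T t') t - t)
          - max (min T t') t * b * aT * Real.exp (-r * (T - max (min T t') t)) := by
  set M := max (min T t') t with hMdef
  have htM : t ≤ M := le_max_right _ _
  have hMT : M ≤ T := max_le (min_le_left _ _) htT
  set g : ℝ → ℝ := fun s => c * (s - t) - s * b * aT * Real.exp (-r * (T - s)) with hg
  have hderiv : ∀ s : ℝ, HasDerivAt g
      (c - b * aT * Real.exp (-r * (T - s)) * (1 + r * s)) s := by
    intro s
    have h1 : HasDerivAt (fun s : ℝ => -r * (T - s)) r s := by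
      have := ((hasDerivAt_id s).const_sub T).const_mul (-r)
      simpa using this
    have h2 : HasDerivAt (fun s : ℝ => Real.exp (-r * (T - s)))
        (Real.exp (-r * (T - s)) * r) s := h1.exp
    have h3 : HasDerivAt (fun s : ℝ => s * b * aT) (b * aT) s := by
      simpa [mul_assoc] using (hasDerivAt_id s).mul_const (b * aT)
    have h4 := h3.mul h2
    have h5 := ((hasDerivAt_id s).sub_const t).const_mul c
    have h6 : HasDerivAt g _ s := h5.sub h4
    convert h6 using 1
    ring
  have hcont : Continuous g := by
    apply Continuous.sub
    · exact continuous_const.mul (continuous_id.sub continuous_const)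
    · exact (((continuous_id.mul continuous_const).mul continuous_const).mul
        ((continuous_const.mul (continuous_const.sub continuous_id)).rexp))
  have hmono : ∀ x y : ℝ, 0 ≤ x → x ≤ y →
      b * aT * Real.exp (-r * (T - x)) * (1 + r * x) ≤
        b * aT * Real.exp (-r * (T - y)) * (1 + r * y) := by
    intro x y hx hxy
    have hx1 : (0:ℝ) < 1 + r * x := by nlinarith
    have he : Real.exp (-r * (T - x)) ≤ Real.exp (-r * (T - y)) :=
      Real.exp_le_exp.2 (by nlinarith)
    have hba : (0:ℝ) < b * aT := mul_pos hb haT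
    apply mul_le_mul
    · exact mul_le_mul_of_nonneg_left he hba.le
    · nlinarith
    · exact hx1.le
    · positivity
  have hdiff : ∀ s : ℝ, DifferentiableAt ℝ g s := fun s => (hderiv s).differentiableAt
  have hmon1 : MonotoneOn g (Set.Icc t M) := by
    apply monotoneOn_of_deriv_nonneg (convex_Icc _ _) hcont.continuousOn
    · exact fun s _ => (hdiff s).differentiableWithinAt
    · intro s hs
      rw [interior_Icc] at hs
      rw [(hderiv s).deriv]
      have hMt' : M ≤ t' := by
        rcases le_or_gt (min T t') t with h | h
        · exact absurd (max_eq_right h ▸ hs.2) (lt_irrefl _ ∘ (hs.1.trans ·))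
        · rw [hMdef, max_eq_left h.le]; exact min_le_right _ _
      have hs0 : 0 ≤ s := ht0.trans hs.1.le
      have := hmono s t' hs0 (hs.2.le.trans hMt')
      linarith [hroot ▸ this]
  have hant1 : AntitoneOn g (Set.Icc M T) := by
    apply antitoneOn_of_deriv_nonpos (convex_Icc _ _) hcont.continuousOn
    · exact fun s _ => (hdiff s).differentiableWithinAt
    · intro s hs
      rw [interior_Icc] at hs
      rw [(hderiv s).deriv]
      have ht'M : t' ≤ M := by
        have hminlt : min T t' < T := lt_of_le_of_lt (le_max_left _ _ : min T t' ≤ M) (hs.1.trans hs.2)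
        have ht'T : t' < T := by
          rcases min_lt_iff.1 hminlt with h | h
          · exact absurd h (lt_irrefl T)
          · exact h
        calc t' = min T t' := (min_eq_right ht'T.le).symm
          _ ≤ M := le_max_left _ _
      have := hmono t' s ht' (ht'M.trans hs.1.le)
      linarith [hroot ▸ this]
  intro s hts hsT
  show g s ≤ g M
  rcases le_or_gt s M with h | h
  · exact hmon1 ⟨hts, h⟩ ⟨htM, le_refl M⟩ h
  · exact hant1 ⟨le_refl M, hMT⟩ ⟨h.le, hsT⟩ h.le
end

section
/- Optimal switching time for the Florida second election option (deterministic salary, continuous time): let b, ä, c > 0, γ > 0, μ_L, r ∈ ℝ with μ_L ≠ r and μ_L − r + γ ≥ 0, and 0 ≤ t ≤ T. Define g : [t,T] → ℝ by g(s) = (c/(μ_L − r))·(e^{(μ_L−r)(s−t)} − 1) − s·b·ä·e^{(μ_L−r)(s−t)}·e^{−γ(T−s)}. Suppose t' ≥ 0 satisfies c = b·ä·e^{−γ(T−t')}·(1 + t'·(μ_L − r + γ)). Then s* = max(min(T, t'), t) maximizes g on [t,T]: g(s*) ≥ g(s) for all s ∈ [t,T]. -/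
open Real

/-- Optimal switching time for the Florida second election option
(deterministic salary, continuous time): with
`g(s) = (c/(μ_L−r))·(e^{(μ_L−r)(s−t)} − 1) − s·b·ä·e^{(μ_L−r)(s−t)}·e^{−γ(T−s)}`
and `t'` a root of `c = b·ä·e^{−γ(T−t')}·(1 + t'·(μ_L − r + γ))`, the clamp
`s* = max(min(T, t'), t)` maximizes `g` on `[t,T]`. -/
theorem florida_optimal_switching_deterministic (r μL γ b aT c T t t' : ℝ)
    (hb : 0 < b) (haT : 0 < aT) (hc : 0 < c) (hγ : 0 < γ)
    (hne : μL ≠ r) (hk : 0 ≤ μL - r + γ)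
    (ht0 : 0 ≤ t) (htT : t ≤ T) (ht' : 0 ≤ t')
    (hroot : c = b * aT * Real.exp (-γ * (T - t')) * (1 + t' * (μL - r + γ))) :
    ∀ s : ℝ, t ≤ s → s ≤ T →
      (c / (μL - r)) * (Real.exp ((μL - r) * (s - t)) - 1)
          - s * b * aT * Real.exp ((μL - r) * (s - t)) * Real.exp (-γ * (T - s)) ≤
        (c / (μL - r)) * (Real.exp ((μL - r) * (max (min T t') t - t)) - 1)
          - max (min T t') t * b * aT * Real.exp ((μL - r) * (max (min T t') t - t))
              * Real.exp (-γ * (T - max (min T t') t)) := by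
  intro s hs1 hs2
  set A : ℝ := μL - r with hA
  have hA0 : A ≠ 0 := sub_ne_zero.mpr hne
  set sstar : ℝ := max (min T t') t with hss
  let g : ℝ → ℝ := fun x => (c / A) * (Real.exp (A * (x - t)) - 1)
      - x * b * aT * Real.exp (A * (x - t)) * Real.exp (-γ * (T - x))
  have hts : t ≤ sstar := le_max_right _ _
  have hsT : sstar ≤ T := max_le (min_le_left _ _) htT
  -- derivative of g
  have hderiv : ∀ x : ℝ, HasDerivAt g
      (Real.exp (A * (x - t)) * (c - b * aT * Real.exp (-γ * (T - x)) * (1 + x * (A + γ)))) x := by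
    intro x
    have h1 : HasDerivAt (fun s : ℝ => A * (s - t)) A x := by
      simpa using ((hasDerivAt_id x).sub_const t).const_mul A
    have h2 : HasDerivAt (fun s : ℝ => -γ * (T - s)) γ x := by
      have h := ((hasDerivAt_id x).const_sub T).const_mul (-γ)
      simpa using h
    have he1 := h1.exp
    have he2 := h2.exp
    have h3 : HasDerivAt (fun s : ℝ => s * b * aT) (b * aT) x := by
      simpa using ((hasDerivAt_id x).mul_const b).mul_const aT
    have hu := (h3.mul he1).mul he2
    have hfirst := (he1.sub_const 1).const_mul (c / A)
    have := hfirst.sub hu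
    refine HasDerivAt.congr_deriv this ?_
    simp only [Pi.mul_apply]
    have hAA : c / A * A = c := div_mul_cancel₀ c hA0
    linear_combination (Real.exp (A * (x - t))) * hAA
  have hdiff : ∀ x : ℝ, DifferentiableAt ℝ g x := fun x => (hderiv x).differentiableAt
  have hderiv' : ∀ x : ℝ, deriv g x
      = Real.exp (A * (x - t)) * (c - b * aT * Real.exp (-γ * (T - x)) * (1 + x * (A + γ))) :=
    fun x => (hderiv x).deriv
  have hAγ : 0 ≤ A + γ := hk
  -- sign of the bracket
  have hbr_nonneg : ∀ x : ℝ, 0 ≤ x → x ≤ t' →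
      0 ≤ c - b * aT * Real.exp (-γ * (T - x)) * (1 + x * (A + γ)) := by
    intro x hx0 hxt'
    have he : Real.exp (-γ * (T - x)) ≤ Real.exp (-γ * (T - t')) :=
      Real.exp_le_exp.mpr (by nlinarith)
    have h1 : (0:ℝ) ≤ 1 + x * (A + γ) := by nlinarith
    have h2 : 1 + x * (A + γ) ≤ 1 + t' * (A + γ) := by nlinarith
    have hba : (0:ℝ) ≤ b * aT := by positivity
    have h4 := mul_le_mul_of_nonneg_left (mul_le_mul he h2 h1 (Real.exp_nonneg _)) hba
    nlinarith [h4]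
  have hbr_nonpos : ∀ x : ℝ, t' ≤ x →
      c - b * aT * Real.exp (-γ * (T - x)) * (1 + x * (A + γ)) ≤ 0 := by
    intro x hxt'
    have he : Real.exp (-γ * (T - t')) ≤ Real.exp (-γ * (T - x)) :=
      Real.exp_le_exp.mpr (by nlinarith)
    have h1 : (0:ℝ) ≤ 1 + t' * (A + γ) := by nlinarith
    have h2 : 1 + t' * (A + γ) ≤ 1 + x * (A + γ) := by nlinarith
    have hba : (0:ℝ) ≤ b * aT := by positivity
    have h4 := mul_le_mul_of_nonneg_left (mul_le_mul he h2 h1 (Real.exp_nonneg _)) hba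
    nlinarith [h4]
  have key : g s ≤ g sstar := by
    rcases le_total s sstar with hcase | hcase
    · -- monotone on [t, sstar]
      have hmono : MonotoneOn g (Set.Icc t sstar) := by
        apply monotoneOn_of_deriv_nonneg (convex_Icc t sstar)
        · exact fun x _ => (hdiff x).continuousAt.continuousWithinAt
        · exact fun x _ => (hdiff x).differentiableWithinAt
        · intro x hx
          rw [interior_Icc] at hx
          rw [hderiv' x]
          apply mul_nonneg (Real.exp_nonneg _)
          have hx0 : 0 ≤ x := le_trans ht0 (le_of_lt hx.1)
          have hxt' : x ≤ t' := by
            have h1 : x < max (min T t') t := hss ▸ hx.2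
            rcases lt_max_iff.mp h1 with h | h
            · exact le_of_lt (lt_of_lt_of_le h (min_le_right T t'))
            · linarith [hx.1]
          exact hbr_nonneg x hx0 hxt'
      exact hmono (Set.mem_Icc.mpr ⟨hs1, hcase⟩) (Set.mem_Icc.mpr ⟨hts, le_rfl⟩) hcase
    · -- antitone on [sstar, T]
      have hanti : AntitoneOn g (Set.Icc sstar T) := by
        apply antitoneOn_of_deriv_nonpos (convex_Icc sstar T)
        · exact fun x _ => (hdiff x).continuousAt.continuousWithinAt
        · exact fun x _ => (hdiff x).differentiableWithinAt
        · intro x hx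
          rw [interior_Icc] at hx
          rw [hderiv' x]
          apply mul_nonpos_of_nonneg_of_nonpos (Real.exp_nonneg _)
          have hxt' : t' ≤ x := by
            have hmin : min T t' < x := lt_of_le_of_lt (hss ▸ le_max_left (min T t') t : min T t' ≤ sstar) hx.1
            rcases le_total t' T with h | h
            · rw [min_eq_right h] at hmin; exact le_of_lt hmin
            · rw [min_eq_left h] at hmin; linarith [hx.2]
          exact hbr_nonpos x hxt'
      exact hanti (Set.mem_Icc.mpr ⟨le_rfl, hsT⟩) (Set.mem_Icc.mpr ⟨hcase, hs2⟩) hcase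
  simpa only [g] using key
end

section
/- Optional sampling identity for the DC wealth process: for every stopping time τ with respect to (F_n) that is bounded by some N ∈ ℕ, E[ e^{−rτ}·W_τ ] = w + E[ Σ_{u=0}^{τ−1} e^{−ru}·c·L_u ]. -/
open MeasureTheory Real Finset

lemma dc_aux {Ω : Type*} {m0 : MeasurableSpace Ω} {P : Measure Ω} [IsProbabilityMeasure P]
    (ℱ : Filtration ℕ m0) (M : ℕ → Ω → ℝ) (hM : Martingale M ℱ P)
    (hMpos : ∀ n, ∀ᵐ ω ∂P, 0 < M n ω)
    (hMint : ∀ u n : ℕ, u ≤ n → Integrable (fun ω => M n ω / M u ω) P)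
    (τ : Ω → ℕ) (hτ : IsStoppingTime ℱ (fun ω => (τ ω : WithTop ℕ))) (N : ℕ) (hτN : ∀ ω, τ ω ≤ N)
    (u : ℕ) (A : Set Ω) (hA : MeasurableSet[ℱ u] A) :
    Integrable (fun ω => A.indicator (fun _ => (1:ℝ)) ω * (M (max (τ ω) u) ω / M u ω)) P ∧
      ∫ ω, A.indicator (fun _ => (1:ℝ)) ω * (M (max (τ ω) u) ω / M u ω) ∂P = (P A).toReal := by
  set σ : Ω → ℕ := fun ω => max (τ ω) u with hσdef
  have hσ : IsStoppingTime ℱ (fun ω => (σ ω : WithTop ℕ)) :=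
    hτ.max_const u
  have hσN : ∀ ω, σ ω ≤ max N u := fun ω => max_le_max (hτN ω) le_rfl
  have hAm : MeasurableSet A := ℱ.le u _ hA
  -- integrability of M (σ ω) ω / M u ω
  have hrep : (fun ω => M (σ ω) ω / M u ω)
      = fun ω => ∑ n ∈ Finset.Icc u (max N u),
          Set.indicator {x | σ x = n} (fun x => M n x / M u x) ω := by
    funext ω
    rw [Finset.sum_eq_single_of_mem (σ ω)
      (Finset.mem_Icc.2 ⟨le_max_right _ _, hσN ω⟩)]
    · exact (Set.indicator_of_mem (by simp : ω ∈ {x | σ x = σ ω}) (fun x => M (σ ω) x / M u x)).symm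
    · intro n _ hn
      exact Set.indicator_of_notMem (fun h => hn (Set.mem_setOf.1 h).symm) _
  have hXint : Integrable (fun ω => M (σ ω) ω / M u ω) P := by
    rw [hrep]
    refine integrable_finset_sum _ fun n hn => ?_
    exact (hMint u n (Finset.mem_Icc.1 hn).1).indicator (ℱ.le n _ (by simpa using hσ.measurableSet_eq n))
  have hYint : Integrable (fun ω => A.indicator (fun _ => (1:ℝ)) ω * (M (σ ω) ω / M u ω)) P := by
    refine Integrable.mono' hXint.abs
      (((stronglyMeasurable_const.indicator hAm).aestronglyMeasurable).mul hXint.1) ?_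
    filter_upwards [] with ω
    rw [norm_mul]
    by_cases h : ω ∈ A <;>
      simp [Set.indicator_of_mem, Set.indicator_of_notMem, h, abs_nonneg, abs_div] <;>
      positivity
  refine ⟨hYint, ?_⟩
  -- optional sampling: P[stoppedValue M (fun ω => (σ ω : WithTop ℕ)) | ℱ u] =ᵐ M u
  have hsv : stoppedValue M (fun _ => u)
      =ᵐ[P] P[stoppedValue M (fun ω => (σ ω : WithTop ℕ)) | (isStoppingTime_const ℱ u).measurableSpace] :=
    Martingale.stoppedValue_ae_eq_condExp_of_le hM hσ (isStoppingTime_const ℱ u)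
      (fun ω => WithTop.coe_le_coe.2 (le_max_right _ _)) (fun ω => WithTop.coe_le_coe.2 (hσN ω))
  rw [IsStoppingTime.measurableSpace_const] at hsv
  have hcond : P[stoppedValue M (fun ω => (σ ω : WithTop ℕ)) | ℱ u] =ᵐ[P] M u := hsv.symm
  -- pull-out
  set g : Ω → ℝ := fun ω => A.indicator (fun _ => (1:ℝ)) ω * (M u ω)⁻¹ with hgdef
  have hg : StronglyMeasurable[ℱ u] g :=
    (stronglyMeasurable_const.indicator hA).mul ((hM.stronglyAdapted u).measurable.inv).stronglyMeasurable
  have hXint' : Integrable (stoppedValue M (fun ω => (σ ω : WithTop ℕ))) P :=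
    integrable_stoppedValue ℕ hσ hM.integrable (fun ω => WithTop.coe_le_coe.2 (hσN ω))
  have hgX : (fun ω => g ω * stoppedValue M (fun ω => (σ ω : WithTop ℕ)) ω)
      = fun ω => A.indicator (fun _ => (1:ℝ)) ω * (M (σ ω) ω / M u ω) := by
    funext ω
    simp only [hgdef, stoppedValue, div_eq_mul_inv]
    show _ * M (σ ω) ω = _
    ring
  have hGint : Integrable (g * stoppedValue M (fun ω => (σ ω : WithTop ℕ))) P := by
    have : (g * stoppedValue M (fun ω => (σ ω : WithTop ℕ))) = fun ω => g ω * stoppedValue M (fun ω => (σ ω : WithTop ℕ)) ω := rfl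
    rw [this, hgX]; exact hYint
  have hmul : P[g * stoppedValue M (fun ω => (σ ω : WithTop ℕ)) | ℱ u] =ᵐ[P] g * P[stoppedValue M (fun ω => (σ ω : WithTop ℕ)) | ℱ u] :=
    condExp_mul_of_stronglyMeasurable_left hg hGint hXint'
  calc ∫ ω, A.indicator (fun _ => (1:ℝ)) ω * (M (σ ω) ω / M u ω) ∂P
      = ∫ ω, (g * stoppedValue M (fun ω => (σ ω : WithTop ℕ))) ω ∂P := by rw [show (g * stoppedValue M (fun ω => (σ ω : WithTop ℕ))) = fun ω => g ω * stoppedValue M (fun ω => (σ ω : WithTop ℕ)) ω from rfl, hgX]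
    _ = ∫ ω, (P[g * stoppedValue M (fun ω => (σ ω : WithTop ℕ)) | ℱ u]) ω ∂P := (integral_condExp (ℱ.le u)).symm
    _ = ∫ ω, A.indicator (fun _ => (1:ℝ)) ω ∂P := by
        refine integral_congr_ae ?_
        filter_upwards [hmul, hcond, hMpos u] with ω h1 h2 h3
        rw [h1]
        simp only [Pi.mul_apply, h2, hgdef]
        rw [mul_assoc, inv_mul_cancel₀ h3.ne', mul_one]
    _ = (P A).toReal := by
        rw [show (fun _ : Ω => (1:ℝ)) = (1 : Ω → ℝ) from rfl]
        exact integral_indicator_one hAm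

/-- Optional sampling identity for the DC wealth process
`W_n = w·(S_n/S_0) + Σ_{u<n} (S_n/S_u)·c·L_u`: for every stopping time `τ`
bounded by some `N`, `E[e^{−rτ}·W_τ] = w + E[Σ_{u<τ} e^{−ru}·c·L_u]`. -/
theorem optional_sampling_dc_wealth
    {Ω : Type*} {m0 : MeasurableSpace Ω} {P : Measure Ω} [IsProbabilityMeasure P]
    (ℱ : Filtration ℕ m0) (r c : ℝ) (hc : 0 < c) (L : ℕ → ℝ) (hL : ∀ n, 0 < L n)
    (S : ℕ → Ω → ℝ) (hadapted : Adapted ℱ S)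
    (hpos : ∀ n, ∀ᵐ ω ∂P, 0 < S n ω)
    (hmart : Martingale (fun (n : ℕ) (ω : Ω) => Real.exp (-(r * (n : ℝ))) * S n ω) ℱ P)
    (hint : ∀ u n : ℕ, u ≤ n → Integrable (fun ω => S n ω / S u ω) P)
    (w : ℝ) (hw : 0 ≤ w)
    (τ : Ω → ℕ) (hτ : IsStoppingTime ℱ (fun ω => (τ ω : WithTop ℕ))) (N : ℕ) (hτN : ∀ ω, τ ω ≤ N) :
    ∫ ω, Real.exp (-(r * ((τ ω : ℕ) : ℝ))) *
          (w * (S (τ ω) ω / S 0 ω)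
            + ∑ u ∈ Finset.range (τ ω), (S (τ ω) ω / S u ω) * (c * L u)) ∂P
      = w + ∫ ω, (∑ u ∈ Finset.range (τ ω), Real.exp (-(r * (u : ℝ))) * (c * L u)) ∂P := by
  set M : ℕ → Ω → ℝ := fun n ω => Real.exp (-(r * (n : ℝ))) * S n ω with hMdef
  have hMpos : ∀ n, ∀ᵐ ω ∂P, 0 < M n ω := by
    intro n
    filter_upwards [hpos n] with ω h
    exact mul_pos (Real.exp_pos _) h
  have hMint : ∀ u n : ℕ, u ≤ n → Integrable (fun ω => M n ω / M u ω) P := by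
    intro u n h
    have : (fun ω => M n ω / M u ω)
        = fun ω => (Real.exp (-(r * (n : ℝ))) / Real.exp (-(r * (u : ℝ)))) * (S n ω / S u ω) := by
      funext ω; rw [div_mul_div_comm]
    rw [this]
    exact (hint u n h).const_mul _
  have hM0 : ∀ ω, M 0 ω = S 0 ω := by
    intro ω; simp [hMdef]
  -- events
  set A : ℕ → Set Ω := fun u => {x | u < τ x} with hAdef
  have hA : ∀ u, MeasurableSet[ℱ u] (A u) := by
    intro u
    have : A u = {x | τ x ≤ u}ᶜ := by ext x; simp [hAdef, not_le]
    rw [this]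
    exact (by simpa using hτ u : MeasurableSet[ℱ u] {x | τ x ≤ u}).compl
  -- the term functions
  have haux := fun u => dc_aux ℱ M hmart hMpos hMint τ hτ N hτN u (A u) (hA u)
  have haux0 := dc_aux ℱ M hmart hMpos hMint τ hτ N hτN 0 Set.univ MeasurableSet.univ
  -- a.e. pointwise identity for the LHS integrand
  have hSpos : ∀ᵐ ω ∂P, ∀ n, 0 < S n ω := ae_all_iff.2 hpos
  have hptwise : ∀ᵐ ω ∂P,
      Real.exp (-(r * ((τ ω : ℕ) : ℝ))) *
          (w * (S (τ ω) ω / S 0 ω)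
            + ∑ u ∈ Finset.range (τ ω), (S (τ ω) ω / S u ω) * (c * L u))
      = w * (Set.indicator Set.univ (fun _ => (1:ℝ)) ω * (M (max (τ ω) 0) ω / M 0 ω))
        + ∑ u ∈ Finset.range N, (Real.exp (-(r * (u : ℝ))) * (c * L u)) *
            ((A u).indicator (fun _ => (1:ℝ)) ω * (M (max (τ ω) u) ω / M u ω)) := by
    filter_upwards [hSpos] with ω h
    have hsum : ∑ u ∈ Finset.range N, (Real.exp (-(r * (u : ℝ))) * (c * L u)) *
            ((A u).indicator (fun _ => (1:ℝ)) ω * (M (max (τ ω) u) ω / M u ω))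
        = ∑ u ∈ Finset.range (τ ω), Real.exp (-(r * ((τ ω : ℕ) : ℝ))) *
            ((S (τ ω) ω / S u ω) * (c * L u)) := by
      rw [← Finset.sum_subset (Finset.range_subset_range.2 (hτN ω))]
      · refine Finset.sum_congr rfl fun u hu => ?_
        have hu' : u < τ ω := Finset.mem_range.1 hu
        have hmem : ω ∈ A u := hu'
        rw [Set.indicator_of_mem hmem, max_eq_left hu'.le, one_mul]
        have hdiv : M (τ ω) ω / M u ω
            = (Real.exp (-(r * ((τ ω : ℕ) : ℝ))) / Real.exp (-(r * (u : ℝ)))) *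
              (S (τ ω) ω / S u ω) := by rw [div_mul_div_comm]
        rw [hdiv, show Real.exp (-(r * ((τ ω : ℕ) : ℝ))) / Real.exp (-(r * (u : ℝ)))
            = Real.exp (-(r * ((τ ω : ℕ) : ℝ)) - -(r * (u : ℝ))) from (Real.exp_sub _ _).symm,
          show Real.exp (-(r * (u : ℝ))) * (c * L u) *
              (Real.exp (-(r * ((τ ω : ℕ) : ℝ)) - -(r * (u : ℝ))) * (S (τ ω) ω / S u ω))
            = Real.exp (-(r * (u : ℝ)) + (-(r * ((τ ω : ℕ) : ℝ)) - -(r * (u : ℝ)))) *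
              (S (τ ω) ω / S u ω * (c * L u)) from by rw [Real.exp_add]; ring,
          show -(r * (u : ℝ)) + (-(r * ((τ ω : ℕ) : ℝ)) - -(r * (u : ℝ)))
            = -(r * ((τ ω : ℕ) : ℝ)) from by ring]
      · intro u _ hu
        have : ω ∉ A u := by
          simp only [hAdef, Set.mem_setOf_eq, not_lt]
          exact le_of_not_gt (fun hc' => hu (Finset.mem_range.2 hc'))
        rw [Set.indicator_of_notMem this, zero_mul, mul_zero]
    rw [hsum, mul_add, Finset.mul_sum]
    congr 1
    rw [Set.indicator_of_mem (Set.mem_univ ω), one_mul, max_eq_left (Nat.zero_le _), hM0 ω]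
    simp only [hMdef]
    ring
  rw [integral_congr_ae hptwise]
  -- integrate term by term
  have hint1 : Integrable (fun ω =>
      w * (Set.indicator Set.univ (fun _ => (1:ℝ)) ω * (M (max (τ ω) 0) ω / M 0 ω))) P :=
    haux0.1.const_mul w
  have hint2 : ∀ u ∈ Finset.range N, Integrable (fun ω =>
      (Real.exp (-(r * (u : ℝ))) * (c * L u)) *
        ((A u).indicator (fun _ => (1:ℝ)) ω * (M (max (τ ω) u) ω / M u ω))) P :=
    fun u _ => (haux u).1.const_mul _
  rw [integral_add hint1 (integrable_finset_sum _ hint2), integral_finset_sum _ hint2,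
    integral_const_mul, haux0.2, measure_univ, ENNReal.toReal_one, mul_one]
  have hterm : ∀ u ∈ Finset.range N,
      ∫ ω, (Real.exp (-(r * (u : ℝ))) * (c * L u)) *
        ((A u).indicator (fun _ => (1:ℝ)) ω * (M (max (τ ω) u) ω / M u ω)) ∂P
      = (Real.exp (-(r * (u : ℝ))) * (c * L u)) * (P (A u)).toReal := by
    intro u _
    rw [integral_const_mul, (haux u).2]
  rw [Finset.sum_congr rfl hterm]
  -- RHS
  have hrhs : ∀ ω, (∑ u ∈ Finset.range (τ ω), Real.exp (-(r * (u : ℝ))) * (c * L u))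
      = ∑ u ∈ Finset.range N, (A u).indicator
          (fun _ => Real.exp (-(r * (u : ℝ))) * (c * L u)) ω := by
    intro ω
    rw [← Finset.sum_subset (Finset.range_subset_range.2 (hτN ω))]
    · exact Finset.sum_congr rfl fun u hu =>
        (Set.indicator_of_mem (show ω ∈ A u from Finset.mem_range.1 hu)
          (fun _ => Real.exp (-(r * (u : ℝ))) * (c * L u))).symm
    · intro u _ hu
      refine Set.indicator_of_notMem ?_ _
      simp only [hAdef, Set.mem_setOf_eq, not_lt]
      exact le_of_not_gt (fun hc' => hu (Finset.mem_range.2 hc'))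
  have hAm : ∀ u, MeasurableSet (A u) := fun u => ℱ.le u _ (hA u)
  rw [show (fun ω => ∑ u ∈ Finset.range (τ ω), Real.exp (-(r * (u : ℝ))) * (c * L u))
      = fun ω => ∑ u ∈ Finset.range N, (A u).indicator
          (fun _ => Real.exp (-(r * (u : ℝ))) * (c * L u)) ω from funext hrhs,
    integral_finset_sum _ (fun u _ => (integrable_const _).indicator (hAm u))]
  simp only [integral_indicator_const _ (hAm _), smul_eq_mul]
  congr 1
  exact Finset.sum_congr rfl fun u _ => mul_comm _ _
end
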